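/- arXiv:1712.03047 — 6 statements merged into one kernel-verified Lean document; each statement's English description precedes it below -/
import Mathlib

section
/- There exists a constant C = C(α) > 0 such that for all integers n ≥ 1 and α ∈ (0,1), the sum ∑_{j=1}^{n} b_{jn} / j^{1-α} is bounded by C·η(n), where η(n) = n^{-α} if α ∈ (0,1/2), η(n) = n^{-1/2} ln(n+1) if α = 1/2, and η(n) = n^{-(1-α)} if α ∈ (1/2,1). -/
open Real Finset intervalIntegral MeasureTheory

/-- The coefficient `b_{jn} = ∫_{j-1}^{j} x^{α-1} (n-x)^{-α} dx`. -/
noncomputable def bCoeff (α : ℝ) (j n : ℕ) : ℝ :=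
  ∫ x in ((j : ℝ) - 1)..(j : ℝ), x ^ (α - 1) * ((n : ℝ) - x) ^ (-α)

/-- The majorant `η(n)` depending on the range of `α`. -/
noncomputable def eta (α : ℝ) (n : ℕ) : ℝ :=
  if α < 1/2 then (n : ℝ) ^ (-α)
  else if α = 1/2 then (n : ℝ) ^ (-(1/2 : ℝ)) * Real.log ((n : ℝ) + 1)
  else (n : ℝ) ^ (-(1 - α))

lemma intBound {f g : ℝ → ℝ} {a b : ℝ} (hab : a ≤ b)
    (hg : IntervalIntegrable g volume a b)
    (hle : ∀ x ∈ Set.Icc a b, f x ≤ g x)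
    (hgpos : ∀ x ∈ Set.Icc a b, 0 ≤ g x) :
    (∫ x in a..b, f x) ≤ ∫ x in a..b, g x := by
  by_cases hf : IntervalIntegrable f volume a b
  · exact intervalIntegral.integral_mono_on hab hf hg hle
  · rw [intervalIntegral.integral_undef hf]
    exact intervalIntegral.integral_nonneg hab hgpos

lemma integrable_sub_rpow (c : ℝ) {r : ℝ} (hr : -1 < r) (p q : ℝ) :
    IntervalIntegrable (fun x => (c - x) ^ r) volume p q := by
  have h := (intervalIntegral.intervalIntegrable_rpow' (a := c - p) (b := c - q) hr).comp_sub_left c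
  simpa using h

lemma integrable_rpow_pos {a b : ℝ} (ha : 0 < a) (hb : 0 < b) (s : ℝ) :
    IntervalIntegrable (fun x : ℝ => x ^ s) volume a b := by
  apply ContinuousOn.intervalIntegrable
  intro x hx
  have hx0 : x ≠ 0 := by
    rcases Set.mem_uIcc.mp hx with ⟨h, _⟩ | ⟨h, _⟩ <;> nlinarith
  exact (Real.continuousAt_rpow_const x s (Or.inl hx0)).continuousWithinAt

lemma int_rpow_val {r : ℝ} (hr : -1 < r) (b : ℝ) : ∫ x in (0:ℝ)..b, x ^ r = b ^ (r+1) / (r+1) := by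
  rw [integral_rpow (Or.inl hr), Real.zero_rpow (by linarith), sub_zero]

lemma b_small1 {α : ℝ} (h0 : 0 < α) (h1 : α < 1) {n : ℕ} (hn : 2 ≤ n) :
    bCoeff α 1 n ≤ ((n:ℝ)/2) ^ (-α) * (1/α) := by
  have hn2 : (2:ℝ) ≤ (n:ℝ) := by exact_mod_cast hn
  have hpos : (0:ℝ) < (n:ℝ)/2 := by linarith
  unfold bCoeff
  push_cast
  rw [show ((1:ℝ) - 1) = 0 by ring]
  calc (∫ x in (0:ℝ)..1, x ^ (α-1) * ((n:ℝ) - x) ^ (-α))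
      ≤ ∫ x in (0:ℝ)..1, ((n:ℝ)/2) ^ (-α) * x ^ (α-1) := by
        apply intBound zero_le_one
        · exact (intervalIntegral.intervalIntegrable_rpow' (by linarith)).const_mul _
        · rintro x ⟨hx0, hx1⟩
          have h2 : ((n:ℝ) - x) ^ (-α) ≤ ((n:ℝ)/2) ^ (-α) :=
            Real.rpow_le_rpow_of_nonpos hpos (by linarith) (by linarith)
          have h3 : 0 ≤ x ^ (α - 1) := Real.rpow_nonneg hx0 _
          calc x ^ (α-1) * ((n:ℝ)-x) ^ (-α) ≤ x ^ (α-1) * ((n:ℝ)/2) ^ (-α) :=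
                mul_le_mul_of_nonneg_left h2 h3
            _ = ((n:ℝ)/2) ^ (-α) * x ^ (α-1) := mul_comm _ _
        · rintro x ⟨hx0, hx1⟩
          exact mul_nonneg (Real.rpow_nonneg hpos.le _) (Real.rpow_nonneg hx0 _)
    _ = ((n:ℝ)/2) ^ (-α) * (1/α) := by
        rw [intervalIntegral.integral_const_mul, int_rpow_val (by linarith) 1,
          show α - 1 + 1 = α by ring, Real.one_rpow]

lemma b_small2 {α : ℝ} (h0 : 0 < α) (h1 : α < 1) {j n : ℕ} (hj : 2 ≤ j) (hjn : 2*j ≤ n) :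
    bCoeff α j n ≤ ((n:ℝ)/2) ^ (-α) * ((j:ℝ)-1) ^ (α-1) := by
  have hj2 : (2:ℝ) ≤ (j:ℝ) := by exact_mod_cast hj
  have hjn2 : 2*(j:ℝ) ≤ (n:ℝ) := by exact_mod_cast hjn
  have hpos : (0:ℝ) < (n:ℝ)/2 := by linarith
  unfold bCoeff
  calc (∫ x in ((j:ℝ)-1)..(j:ℝ), x ^ (α-1) * ((n:ℝ) - x) ^ (-α))
      ≤ ∫ _x in ((j:ℝ)-1)..(j:ℝ), ((n:ℝ)/2) ^ (-α) * ((j:ℝ)-1) ^ (α-1) := by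
        apply intBound (by linarith)
        · exact intervalIntegrable_const
        · rintro x ⟨hx0, hx1⟩
          have h2 : ((n:ℝ) - x) ^ (-α) ≤ ((n:ℝ)/2) ^ (-α) :=
            Real.rpow_le_rpow_of_nonpos hpos (by linarith) (by linarith)
          have h3 : x ^ (α-1) ≤ ((j:ℝ)-1) ^ (α-1) :=
            Real.rpow_le_rpow_of_nonpos (by linarith) hx0 (by linarith)
          have := mul_le_mul h3 h2 (Real.rpow_nonneg (by linarith) _)
            (Real.rpow_nonneg (by linarith) _)
          linarith [this]
        · rintro x -
          exact mul_nonneg (Real.rpow_nonneg hpos.le _) (Real.rpow_nonneg (by linarith) _)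
    _ = ((n:ℝ)/2) ^ (-α) * ((j:ℝ)-1) ^ (α-1) := by
        rw [intervalIntegral.integral_const, show (j:ℝ) - ((j:ℝ)-1) = 1 by ring, one_smul]

lemma b_big1 {α : ℝ} (h0 : 0 < α) (h1 : α < 1) {j n : ℕ} (hn : 2 ≤ n) (h2j : n < 2*j)
    (hjn : j + 1 ≤ n) :
    bCoeff α j n ≤ ((n:ℝ)/4) ^ (α-1) * ((n:ℝ)-(j:ℝ)) ^ (-α) := by
  have hn2 : (2:ℝ) ≤ (n:ℝ) := by exact_mod_cast hn
  have c1 : (n:ℝ) + 1 ≤ 2*(j:ℝ) := by exact_mod_cast h2j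
  have c2 : (j:ℝ) + 1 ≤ (n:ℝ) := by exact_mod_cast hjn
  have hq : (0:ℝ) < (n:ℝ)/4 := by linarith
  have hlb : (n:ℝ)/4 ≤ (j:ℝ) - 1 := by linarith
  unfold bCoeff
  calc (∫ x in ((j:ℝ)-1)..(j:ℝ), x ^ (α-1) * ((n:ℝ) - x) ^ (-α))
      ≤ ∫ _x in ((j:ℝ)-1)..(j:ℝ), ((n:ℝ)/4) ^ (α-1) * ((n:ℝ)-(j:ℝ)) ^ (-α) := by
        apply intBound (by linarith)
        · exact intervalIntegrable_const
        · rintro x ⟨hx0, hx1⟩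
          have h2 : ((n:ℝ) - x) ^ (-α) ≤ ((n:ℝ)-(j:ℝ)) ^ (-α) :=
            Real.rpow_le_rpow_of_nonpos (by linarith) (by linarith) (by linarith)
          have h3 : x ^ (α-1) ≤ ((n:ℝ)/4) ^ (α-1) :=
            Real.rpow_le_rpow_of_nonpos hq (by linarith) (by linarith)
          exact mul_le_mul h3 h2 (Real.rpow_nonneg (by linarith) _)
            (Real.rpow_nonneg (by linarith) _)
        · rintro x -
          exact mul_nonneg (Real.rpow_nonneg hq.le _) (Real.rpow_nonneg (by linarith) _)
    _ = ((n:ℝ)/4) ^ (α-1) * ((n:ℝ)-(j:ℝ)) ^ (-α) := by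
        rw [intervalIntegral.integral_const, show (j:ℝ) - ((j:ℝ)-1) = 1 by ring, one_smul]

lemma b_big2 {α : ℝ} (h0 : 0 < α) (h1 : α < 1) {n : ℕ} (hn : 2 ≤ n) :
    bCoeff α n n ≤ ((n:ℝ)/4) ^ (α-1) * (1/(1-α)) := by
  have hn2 : (2:ℝ) ≤ (n:ℝ) := by exact_mod_cast hn
  have hq : (0:ℝ) < (n:ℝ)/4 := by linarith
  unfold bCoeff
  calc (∫ x in ((n:ℝ)-1)..(n:ℝ), x ^ (α-1) * ((n:ℝ) - x) ^ (-α))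
      ≤ ∫ x in ((n:ℝ)-1)..(n:ℝ), ((n:ℝ)/4) ^ (α-1) * ((n:ℝ)-x) ^ (-α) := by
        apply intBound (by linarith)
        · exact (integrable_sub_rpow (n:ℝ) (by linarith) _ _).const_mul _
        · rintro x ⟨hx0, hx1⟩
          have h3 : x ^ (α-1) ≤ ((n:ℝ)/4) ^ (α-1) :=
            Real.rpow_le_rpow_of_nonpos hq (by linarith) (by linarith)
          exact mul_le_mul_of_nonneg_right h3 (Real.rpow_nonneg (by linarith) _)
        · rintro x ⟨hx0, hx1⟩
          exact mul_nonneg (Real.rpow_nonneg hq.le _) (Real.rpow_nonneg (by linarith) _)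
    _ = ((n:ℝ)/4) ^ (α-1) * (1/(1-α)) := by
        rw [intervalIntegral.integral_const_mul,
          intervalIntegral.integral_comp_sub_left (fun u : ℝ => u ^ (-α)) (n:ℝ),
          show (n:ℝ) - (n:ℝ) = 0 by ring, show (n:ℝ) - ((n:ℝ)-1) = 1 by ring,
          int_rpow_val (by linarith) 1, show -α + 1 = 1 - α by ring, Real.one_rpow]

lemma half_pow_le_two {β : ℝ} (hb : β ≤ 1) : ((1:ℝ)/2) ^ (-β) ≤ 2 := by
  rw [show ((1:ℝ)/2) = 2⁻¹ by norm_num, ← Real.rpow_neg_one 2,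
    ← Real.rpow_mul (by norm_num : (0:ℝ) ≤ 2)]
  calc (2:ℝ) ^ (-1 * -β) = 2 ^ β := by ring_nf
    _ ≤ 2 ^ (1:ℝ) := Real.rpow_le_rpow_of_exponent_le one_le_two hb
    _ = 2 := Real.rpow_one 2

lemma b_beta {α : ℝ} (h0 : 0 < α) (h1 : α < 1) :
    bCoeff α 1 1 ≤ 2/α + 2/(1-α) := by
  have hhalf1 : ((1:ℝ)/2) ^ (-α) ≤ 2 := half_pow_le_two h1.le
  have hhalf2 : ((1:ℝ)/2) ^ (α-1) ≤ 2 := by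
    have := half_pow_le_two (β := 1-α) (by linarith)
    simpa [show -(1-α) = α - 1 by ring] using this
  unfold bCoeff
  push_cast
  rw [show ((1:ℝ) - 1) = 0 by ring]
  set f : ℝ → ℝ := fun x => x ^ (α-1) * ((1:ℝ) - x) ^ (-α) with hfdef
  by_cases hf : IntervalIntegrable f volume 0 1
  · have hsub1 : Set.uIcc (0:ℝ) (1/2) ⊆ Set.uIcc (0:ℝ) 1 := by
      rw [Set.uIcc_of_le (by norm_num), Set.uIcc_of_le (by norm_num)]
      exact Set.Icc_subset_Icc le_rfl (by norm_num)
    have hsub2 : Set.uIcc (1/2:ℝ) 1 ⊆ Set.uIcc (0:ℝ) 1 := by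
      rw [Set.uIcc_of_le (by norm_num), Set.uIcc_of_le (by norm_num)]
      exact Set.Icc_subset_Icc (by norm_num) le_rfl
    have hsplit : (∫ x in (0:ℝ)..1, f x)
        = (∫ x in (0:ℝ)..(1/2), f x) + ∫ x in (1/2:ℝ)..1, f x :=
      (intervalIntegral.integral_add_adjacent_intervals (hf.mono_set hsub1)
        (hf.mono_set hsub2)).symm
    have part1 : (∫ x in (0:ℝ)..(1/2), f x) ≤ 2/α := by
      calc (∫ x in (0:ℝ)..(1/2), f x) ≤ ∫ x in (0:ℝ)..(1/2), 2 * x ^ (α-1) := by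
            apply intBound (by norm_num)
            · exact (intervalIntegral.intervalIntegrable_rpow' (by linarith)).const_mul _
            · rintro x ⟨hx0, hx1⟩
              have h2 : ((1:ℝ) - x) ^ (-α) ≤ ((1:ℝ)/2) ^ (-α) :=
                Real.rpow_le_rpow_of_nonpos (by norm_num) (by linarith) (by linarith)
              have h3 : 0 ≤ x ^ (α-1) := Real.rpow_nonneg hx0 _
              calc x ^ (α-1) * ((1:ℝ)-x) ^ (-α) ≤ x ^ (α-1) * 2 :=
                    mul_le_mul_of_nonneg_left (h2.trans hhalf1) h3
                _ = 2 * x ^ (α-1) := mul_comm _ _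
            · rintro x ⟨hx0, hx1⟩
              exact mul_nonneg (by norm_num) (Real.rpow_nonneg hx0 _)
        _ = 2 * (((1:ℝ)/2) ^ α / α) := by
            rw [intervalIntegral.integral_const_mul, int_rpow_val (by linarith),
              show α - 1 + 1 = α by ring]
        _ ≤ 2 * (1 / α) := by
            have : ((1:ℝ)/2) ^ α ≤ 1 := Real.rpow_le_one (by norm_num) (by norm_num) h0.le
            have hα : (0:ℝ) < α := h0
            gcongr
        _ = 2/α := by ring
    have part2 : (∫ x in (1/2:ℝ)..1, f x) ≤ 2/(1-α) := by
      calc (∫ x in (1/2:ℝ)..1, f x) ≤ ∫ x in (1/2:ℝ)..1, 2 * ((1:ℝ) - x) ^ (-α) := by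
            apply intBound (by norm_num)
            · exact (integrable_sub_rpow 1 (by linarith) _ _).const_mul _
            · rintro x ⟨hx0, hx1⟩
              have h3 : x ^ (α-1) ≤ ((1:ℝ)/2) ^ (α-1) :=
                Real.rpow_le_rpow_of_nonpos (by norm_num) hx0 (by linarith)
              exact mul_le_mul_of_nonneg_right (h3.trans hhalf2)
                (Real.rpow_nonneg (by linarith) _)
            · rintro x ⟨hx0, hx1⟩
              exact mul_nonneg (by norm_num) (Real.rpow_nonneg (by linarith) _)
        _ = 2 * (((1:ℝ)/2) ^ (1-α) / (1-α)) := by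
            rw [intervalIntegral.integral_const_mul,
              intervalIntegral.integral_comp_sub_left (fun u : ℝ => u ^ (-α)) 1,
              show (1:ℝ) - 1 = 0 by ring, show (1:ℝ) - 1/2 = 1/2 by ring,
              int_rpow_val (by linarith), show -α + 1 = 1 - α by ring]
        _ ≤ 2 * (1 / (1-α)) := by
            have : ((1:ℝ)/2) ^ (1-α) ≤ 1 := Real.rpow_le_one (by norm_num) (by norm_num) (by linarith)
            have hα : (0:ℝ) < 1 - α := by linarith
            gcongr
        _ = 2/(1-α) := by ring
    rw [hsplit]; linarith
  · rw [intervalIntegral.integral_undef hf]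
    exact add_nonneg (div_nonneg two_pos.le h0.le) (div_nonneg two_pos.le (by linarith))

lemma sum_rpow_tail_le {s : ℝ} (hs : s < 0) {n : ℕ} (hn : 1 ≤ n) :
    ∑ k ∈ Finset.Icc 2 n, (k:ℝ) ^ s ≤ ∫ x in (1:ℝ)..(n:ℝ), x ^ s := by
  induction n, hn using Nat.le_induction with
  | base => simp
  | succ n hn ih =>
    have hn1 : (1:ℝ) ≤ (n:ℝ) := by exact_mod_cast hn
    have hint1 : IntervalIntegrable (fun x : ℝ => x ^ s) volume 1 (n:ℝ) :=
      integrable_rpow_pos one_pos (by linarith) s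
    have hint2 : IntervalIntegrable (fun x : ℝ => x ^ s) volume (n:ℝ) ((n:ℝ)+1) :=
      integrable_rpow_pos (by linarith) (by linarith) s
    have hstep : ((n:ℝ)+1) ^ s ≤ ∫ x in (n:ℝ)..((n:ℝ)+1), x ^ s := by
      have := intervalIntegral.integral_mono_on (by linarith : (n:ℝ) ≤ (n:ℝ)+1)
        (_root_.intervalIntegrable_const (c := ((n:ℝ)+1) ^ s)) hint2
        (fun x hx => Real.rpow_le_rpow_of_nonpos (by linarith [hx.1]) (by linarith [hx.2]) hs.le)
      rw [intervalIntegral.integral_const, show (n:ℝ)+1-(n:ℝ) = 1 by ring, one_smul] at this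
      exact this
    rw [Finset.sum_Icc_succ_top (by omega : 2 ≤ n + 1)]
    push_cast
    calc (∑ k ∈ Finset.Icc 2 n, (k:ℝ) ^ s) + ((n:ℝ)+1) ^ s
        ≤ (∫ x in (1:ℝ)..(n:ℝ), x ^ s) + ∫ x in (n:ℝ)..((n:ℝ)+1), x ^ s := by
          exact add_le_add ih hstep
      _ = ∫ x in (1:ℝ)..((n:ℝ)+1), x ^ s :=
          intervalIntegral.integral_add_adjacent_intervals hint1 hint2

lemma sum_rpow_le {s : ℝ} (hs : s < 0) {n : ℕ} (hn : 1 ≤ n) :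
    ∑ k ∈ Finset.Icc 1 n, (k:ℝ) ^ s ≤ 1 + ∫ x in (1:ℝ)..(n:ℝ), x ^ s := by
  have hsplit : ∑ k ∈ Finset.Icc 1 n, (k:ℝ) ^ s
      = (1:ℝ) ^ s + ∑ k ∈ Finset.Icc 2 n, (k:ℝ) ^ s := by
    have he : Finset.Icc 1 n = insert 1 (Finset.Icc 2 n) := by
      ext k; simp only [Finset.mem_Icc, Finset.mem_insert]; omega
    rw [he, Finset.sum_insert (by simp [Finset.mem_Icc]), Nat.cast_one]
  rw [hsplit, Real.one_rpow]
  exact add_le_add le_rfl (sum_rpow_tail_le hs hn)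

lemma int_rpow_eval {s : ℝ} (hs : s ≠ -1) {n : ℕ} (hn : 1 ≤ n) :
    (∫ x in (1:ℝ)..(n:ℝ), x ^ s) = ((n:ℝ) ^ (s+1) - 1) / (s+1) := by
  have hn1 : (1:ℝ) ≤ (n:ℝ) := by exact_mod_cast hn
  rw [integral_rpow (Or.inr ⟨hs, by
    rw [Set.uIcc_of_le hn1]
    rintro ⟨h, -⟩
    linarith⟩), Real.one_rpow]

lemma int_rpow_eval_neg_one {n : ℕ} (hn : 1 ≤ n) :
    (∫ x in (1:ℝ)..(n:ℝ), x ^ (-1:ℝ)) = Real.log n := by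
  have hn1 : (1:ℝ) ≤ (n:ℝ) := by exact_mod_cast hn
  have : (∫ x in (1:ℝ)..(n:ℝ), x ^ (-1:ℝ)) = ∫ x in (1:ℝ)..(n:ℝ), x⁻¹ := by
    apply intervalIntegral.integral_congr
    intro x hx
    exact Real.rpow_neg_one x
  rw [this, integral_inv (by
    rw [Set.uIcc_of_le hn1]
    rintro ⟨h, -⟩
    linarith), div_one]

lemma core {α : ℝ} (h0 : 0 < α) (h1 : α < 1) {n : ℕ} (hn : 2 ≤ n) :
    ∑ j ∈ Finset.Icc 1 n, bCoeff α j n / (j:ℝ) ^ (1-α) ≤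
      2 * (n:ℝ) ^ (-α) * (1/α + 1 + ∑ k ∈ Finset.Icc 1 n, (k:ℝ) ^ (2*α-2))
      + 16 * (n:ℝ) ^ (2*α-2) * (1/(1-α) + 1 + ∑ k ∈ Finset.Icc 1 n, (k:ℝ) ^ (-α)) := by
  have hn2 : (2:ℝ) ≤ (n:ℝ) := by exact_mod_cast hn
  set T := ∑ k ∈ Finset.Icc 1 n, (k:ℝ) ^ (2*α-2) with hT
  set U := ∑ k ∈ Finset.Icc 1 n, (k:ℝ) ^ (-α) with hU
  have hTnn : 0 ≤ T := Finset.sum_nonneg fun k _ => Real.rpow_nonneg (Nat.cast_nonneg k) _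
  have hUnn : 0 ≤ U := Finset.sum_nonneg fun k _ => Real.rpow_nonneg (Nat.cast_nonneg k) _
  -- rewrite division as multiplication
  have hrw : ∑ j ∈ Finset.Icc 1 n, bCoeff α j n / (j:ℝ) ^ (1-α)
      = ∑ j ∈ Finset.Icc 1 n, bCoeff α j n * (j:ℝ) ^ (α-1) := by
    apply Finset.sum_congr rfl
    intro j hj
    rw [div_eq_mul_inv, ← Real.rpow_neg (Nat.cast_nonneg j), show -(1-α) = α - 1 by ring]
  rw [hrw]
  set t : ℕ → ℝ := fun j => bCoeff α j n * (j:ℝ) ^ (α-1) with ht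
  -- split the sum at m = n / 2
  set m := n / 2 with hm
  have hm1 : 1 ≤ m := by omega
  have hmn : m ≤ n := by omega
  have hIoc : Finset.Icc 1 n = Finset.Ioc 0 n := by
    ext k; simp only [Finset.mem_Icc, Finset.mem_Ioc]; omega
  have hsplit : ∑ j ∈ Finset.Icc 1 n, t j
      = (∑ j ∈ Finset.Ioc 0 m, t j) + ∑ j ∈ Finset.Ioc m n, t j := by
    rw [hIoc, Finset.sum_Ioc_consecutive _ (Nat.zero_le m) hmn]
  -- Part A : small j
  have hA : ∑ j ∈ Finset.Ioc 0 m, t j ≤ ((n:ℝ)/2) ^ (-α) * (1/α) + ((n:ℝ)/2) ^ (-α) * T := by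
    have hsplit1 : ∑ j ∈ Finset.Ioc 0 m, t j = t 1 + ∑ j ∈ Finset.Ioc 1 m, t j := by
      rw [← Finset.sum_Ioc_consecutive _ (by omega : 0 ≤ 1) hm1]
      congr 1
      rw [show Finset.Ioc 0 1 = {1} by rfl, Finset.sum_singleton]
    have ht1 : t 1 ≤ ((n:ℝ)/2) ^ (-α) * (1/α) := by
      have := b_small1 h0 h1 hn
      simp only [ht, Nat.cast_one, Real.one_rpow, mul_one]
      exact this
    have htail : ∑ j ∈ Finset.Ioc 1 m, t j
        ≤ ((n:ℝ)/2) ^ (-α) * ∑ j ∈ Finset.Ioc 1 m, ((j-1 : ℕ):ℝ) ^ (2*α-2) := by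
      rw [Finset.mul_sum]
      apply Finset.sum_le_sum
      intro j hj
      rw [Finset.mem_Ioc] at hj
      have hj2 : (2:ℝ) ≤ (j:ℝ) := by exact_mod_cast hj.1
      have hcast : ((j-1 : ℕ):ℝ) = (j:ℝ) - 1 := by
        push_cast [Nat.cast_sub (by omega : 1 ≤ j)]; ring
      have hb := b_small2 h0 h1 (by omega) (by omega : 2*j ≤ n)
      have hjj : (j:ℝ) ^ (α-1) ≤ ((j:ℝ)-1) ^ (α-1) :=
        Real.rpow_le_rpow_of_nonpos (by linarith) (by linarith) (by linarith)
      calc t j ≤ (((n:ℝ)/2) ^ (-α) * ((j:ℝ)-1) ^ (α-1)) * ((j:ℝ)-1) ^ (α-1) := by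
            apply mul_le_mul hb hjj (Real.rpow_nonneg (Nat.cast_nonneg j) _)
            exact mul_nonneg (Real.rpow_nonneg (by linarith) _) (Real.rpow_nonneg (by linarith) _)
        _ = ((n:ℝ)/2) ^ (-α) * ((j-1 : ℕ):ℝ) ^ (2*α-2) := by
            rw [mul_assoc, ← Real.rpow_add (by linarith : (0:ℝ) < (j:ℝ)-1),
              show α - 1 + (α-1) = 2*α-2 by ring, hcast]
    have himg : ∑ j ∈ Finset.Ioc 1 m, ((j-1 : ℕ):ℝ) ^ (2*α-2) ≤ T := by
      rw [hT, ← Finset.sum_image (f := fun k : ℕ => (k:ℝ) ^ (2*α-2))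
        (g := fun j : ℕ => j - 1) (by
          intro x hx y hy hxy
          rw [Finset.mem_coe, Finset.mem_Ioc] at hx hy
          have hxy' : x - 1 = y - 1 := hxy
          omega)]
      apply Finset.sum_le_sum_of_subset_of_nonneg
      · intro k hk
        simp only [Finset.mem_image, Finset.mem_Ioc, Finset.mem_Icc] at *
        obtain ⟨j, hj, rfl⟩ := hk
        omega
      · intro k _ _
        exact Real.rpow_nonneg (Nat.cast_nonneg k) _
    have : ((n:ℝ)/2) ^ (-α) * ∑ j ∈ Finset.Ioc 1 m, ((j-1 : ℕ):ℝ) ^ (2*α-2)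
        ≤ ((n:ℝ)/2) ^ (-α) * T :=
      mul_le_mul_of_nonneg_left himg (Real.rpow_nonneg (by linarith) _)
    rw [hsplit1]
    linarith
  -- Part B : large j
  have hB : ∑ j ∈ Finset.Ioc m n, t j
      ≤ ((n:ℝ)/4) ^ (2*α-2) * U + ((n:ℝ)/4) ^ (2*α-2) * (1/(1-α)) := by
    obtain ⟨p, rfl⟩ : ∃ p, n = p + 1 := ⟨n-1, by omega⟩
    have hmp : m ≤ p := by omega
    have hq : (0:ℝ) < ((p+1:ℕ):ℝ)/4 := by
      have h := hn2; push_cast at h ⊢; linarith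
    rw [Finset.sum_Ioc_succ_top hmp]
    have htop : t (p+1) ≤ ((((p+1:ℕ)):ℝ)/4) ^ (2*α-2) * (1/(1-α)) := by
      have hb := b_big2 h0 h1 (n := p+1) hn
      have hnn : (((p+1:ℕ)):ℝ) ^ (α-1) ≤ ((((p+1:ℕ)):ℝ)/4) ^ (α-1) :=
        Real.rpow_le_rpow_of_nonpos hq (by linarith [hq]) (by linarith)
      calc t (p+1) ≤ (((((p+1:ℕ)):ℝ)/4) ^ (α-1) * (1/(1-α))) * ((((p+1:ℕ)):ℝ)/4) ^ (α-1) := by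
            apply mul_le_mul hb hnn (Real.rpow_nonneg (Nat.cast_nonneg _) _)
            exact mul_nonneg (Real.rpow_nonneg hq.le _)
              (div_nonneg zero_le_one (by linarith))
        _ = ((((p+1:ℕ)):ℝ)/4) ^ (2*α-2) * (1/(1-α)) := by
            rw [mul_comm _ (((((p+1:ℕ)):ℝ)/4) ^ (α-1)), ← mul_assoc,
              ← Real.rpow_add hq, show α - 1 + (α-1) = 2*α-2 by ring]
    have htail : ∑ j ∈ Finset.Ioc m p, t j
        ≤ ((((p+1:ℕ)):ℝ)/4) ^ (2*α-2) * ∑ j ∈ Finset.Ioc m p, (((p+1) - j : ℕ):ℝ) ^ (-α) := by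
      rw [Finset.mul_sum]
      apply Finset.sum_le_sum
      intro j hj
      rw [Finset.mem_Ioc] at hj
      have h2j : p + 1 < 2*j := by omega
      have hjn' : j + 1 ≤ p + 1 := by omega
      have hcast : (((p+1) - j : ℕ):ℝ) = ((p+1:ℕ):ℝ) - (j:ℝ) := by
        push_cast [Nat.cast_sub (by omega : j ≤ p+1)]; ring
      have hjr : ((p+1:ℕ):ℝ) ≤ 4*(j:ℝ) := by
        have : p + 1 ≤ 4*j := by omega
        exact_mod_cast this
      have hb := b_big1 h0 h1 hn h2j hjn'
      have hjj : (j:ℝ) ^ (α-1) ≤ ((((p+1:ℕ)):ℝ)/4) ^ (α-1) :=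
        Real.rpow_le_rpow_of_nonpos hq (by linarith) (by linarith)
      have hjpos : (0:ℝ) < (j:ℝ) := by
        have : 1 ≤ j := by omega
        exact_mod_cast this
      calc t j ≤ (((((p+1:ℕ)):ℝ)/4) ^ (α-1) * (((p+1:ℕ):ℝ)-(j:ℝ)) ^ (-α))
            * ((((p+1:ℕ)):ℝ)/4) ^ (α-1) := by
            apply mul_le_mul hb hjj (Real.rpow_nonneg (Nat.cast_nonneg _) _)
            apply mul_nonneg (Real.rpow_nonneg hq.le _) (Real.rpow_nonneg ?_ _)
            have : (j:ℝ) + 1 ≤ ((p+1:ℕ):ℝ) := by exact_mod_cast hjn'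
            linarith
        _ = ((((p+1:ℕ)):ℝ)/4) ^ (2*α-2) * (((p+1) - j : ℕ):ℝ) ^ (-α) := by
            rw [hcast, mul_comm _ (((((p+1:ℕ)):ℝ)/4) ^ (α-1)), ← mul_assoc,
              ← Real.rpow_add hq, show α - 1 + (α-1) = 2*α-2 by ring]
    have himg : ∑ j ∈ Finset.Ioc m p, (((p+1) - j : ℕ):ℝ) ^ (-α) ≤ U := by
      rw [hU, ← Finset.sum_image (f := fun k : ℕ => (k:ℝ) ^ (-α))
        (g := fun j : ℕ => (p+1) - j) (by
          intro x hx y hy hxy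
          rw [Finset.mem_coe, Finset.mem_Ioc] at hx hy
          have hxy' : p + 1 - x = p + 1 - y := hxy
          omega)]
      apply Finset.sum_le_sum_of_subset_of_nonneg
      · intro k hk
        simp only [Finset.mem_image, Finset.mem_Ioc, Finset.mem_Icc] at *
        obtain ⟨j, hj, rfl⟩ := hk
        omega
      · intro k _ _
        exact Real.rpow_nonneg (Nat.cast_nonneg k) _
    have : ((((p+1:ℕ)):ℝ)/4) ^ (2*α-2) * ∑ j ∈ Finset.Ioc m p, (((p+1) - j : ℕ):ℝ) ^ (-α)
        ≤ ((((p+1:ℕ)):ℝ)/4) ^ (2*α-2) * U :=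
      mul_le_mul_of_nonneg_left himg (Real.rpow_nonneg hq.le _)
    linarith
  -- constants
  have h2n : ((n:ℝ)/2) ^ (-α) ≤ 2 * (n:ℝ) ^ (-α) := by
    rw [show (n:ℝ)/2 = (n:ℝ) * (1/2) by ring,
      Real.mul_rpow (by linarith) (by norm_num)]
    calc (n:ℝ) ^ (-α) * ((1:ℝ)/2) ^ (-α) ≤ (n:ℝ) ^ (-α) * 2 :=
          mul_le_mul_of_nonneg_left (half_pow_le_two h1.le) (Real.rpow_nonneg (by linarith) _)
      _ = 2 * (n:ℝ) ^ (-α) := mul_comm _ _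
  have h4n : ((n:ℝ)/4) ^ (2*α-2) ≤ 16 * (n:ℝ) ^ (2*α-2) := by
    have h14 : ((1:ℝ)/4) ^ (2*α-2) ≤ 16 := by
      rw [show ((1:ℝ)/4) = 4⁻¹ by norm_num, ← Real.rpow_neg_one 4,
        ← Real.rpow_mul (by norm_num : (0:ℝ) ≤ 4), show -1*(2*α-2) = 2-2*α by ring]
      calc (4:ℝ) ^ (2-2*α) ≤ 4 ^ (2:ℝ) :=
            Real.rpow_le_rpow_of_exponent_le (by norm_num) (by linarith)
        _ = 16 := by
            rw [show (2:ℝ) = ((2:ℕ):ℝ) by norm_num, Real.rpow_natCast]; norm_num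
    rw [show (n:ℝ)/4 = (n:ℝ) * (1/4) by ring,
      Real.mul_rpow (by linarith) (by norm_num)]
    calc (n:ℝ) ^ (2*α-2) * ((1:ℝ)/4) ^ (2*α-2) ≤ (n:ℝ) ^ (2*α-2) * 16 :=
          mul_le_mul_of_nonneg_left h14 (Real.rpow_nonneg (by linarith) _)
      _ = 16 * (n:ℝ) ^ (2*α-2) := mul_comm _ _
  have hiα : 0 ≤ 1/α := by positivity
  have hiβ : 0 ≤ 1/(1-α) := by
    have : (0:ℝ) < 1 - α := by linarith
    positivity
  have hc2 : 0 ≤ ((n:ℝ)/2) ^ (-α) := Real.rpow_nonneg (by linarith) _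
  have hc4 : 0 ≤ ((n:ℝ)/4) ^ (2*α-2) := Real.rpow_nonneg (by linarith) _
  have hnα : 0 ≤ (n:ℝ) ^ (-α) := Real.rpow_nonneg (by linarith) _
  have hn2α : 0 ≤ (n:ℝ) ^ (2*α-2) := Real.rpow_nonneg (by linarith) _
  calc ∑ j ∈ Finset.Icc 1 n, t j
      ≤ ((n:ℝ)/2) ^ (-α) * (1/α + T) + ((n:ℝ)/4) ^ (2*α-2) * (1/(1-α) + U) := by
        rw [hsplit]; nlinarith [hA, hB]
    _ ≤ (2 * (n:ℝ) ^ (-α)) * (1/α + 1 + T) + (16 * (n:ℝ) ^ (2*α-2)) * (1/(1-α) + 1 + U) := by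
        apply add_le_add
        · apply mul_le_mul h2n (by linarith) (by linarith) (by linarith)
        · apply mul_le_mul h4n (by linarith) (by linarith) (by linarith)
    _ = 2 * (n:ℝ) ^ (-α) * (1/α + 1 + T) + 16 * (n:ℝ) ^ (2*α-2) * (1/(1-α) + 1 + U) := by
        ring

lemma S_one {α : ℝ} (h0 : 0 < α) (h1 : α < 1) :
    ∑ j ∈ Finset.Icc 1 1, bCoeff α j 1 / (j:ℝ) ^ (1-α) ≤ 2/α + 2/(1-α) := by
  rw [Finset.Icc_self, Finset.sum_singleton, Nat.cast_one, Real.one_rpow, div_one]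
  exact b_beta h0 h1

lemma glue {a b c d T U uA V p q : ℝ}
    (ha : 0 ≤ a) (hb : 0 ≤ b) (hd : 0 ≤ d)
    (hbd : b * d = c) (hbc : b ≤ c)
    (hU : U ≤ 1 + uA * d) (huA : 0 ≤ uA)
    (haV : a ≤ V) (hcV : c ≤ V) (hV : 0 ≤ V)
    (hp : 0 ≤ p) (hq : 0 ≤ q) :
    2*a*(p + 1 + T) + 16*b*(q + 1 + U)
      ≤ (2*(p+1) + 16*(q+2) + 16*uA) * V + 2*a*T := by
  have hc : 0 ≤ c := hbd ▸ mul_nonneg hb hd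
  have h2 : 2*a*(p+1) ≤ 2*(p+1)*V := by nlinarith
  have h3 : 16*b*(q+1+U) ≤ 16*b*(q+2) + 16*uA*(b*d) := by
    nlinarith [mul_nonneg hb (sub_nonneg.mpr hU)]
  have h4 : 16*b*(q+2) ≤ 16*(q+2)*V := by nlinarith
  have h5 : 16*uA*(b*d) ≤ 16*uA*V := by rw [hbd]; nlinarith
  nlinarith

lemma main_est {α : ℝ} (h0 : 0 < α) (h1 : α < 1) : ∀ n : ℕ, 2 ≤ n →
    ∑ j ∈ Finset.Icc 1 n, bCoeff α j n / (j:ℝ) ^ (1-α)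
      ≤ (2*(1/α+1) + 16*(1/(1-α)+2) + 16*(1/(1-α)))
          * (max ((n:ℝ) ^ (-α)) ((n:ℝ) ^ (α-1)))
        + 2 * (n:ℝ) ^ (-α) * ∑ k ∈ Finset.Icc 1 n, (k:ℝ) ^ (2*α-2) := by
  have h1' : (0:ℝ) < 1 - α := by linarith
  have hiα : (0:ℝ) < 1/α := by positivity
  have hiβ : (0:ℝ) < 1/(1-α) := by positivity
  intro n hn
  have hn1 : 1 ≤ n := by omega
  have hn1R : (1:ℝ) ≤ (n:ℝ) := by exact_mod_cast hn1
  have hn0 : (0:ℝ) < (n:ℝ) := by linarith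
  have ha : (0:ℝ) ≤ (n:ℝ) ^ (-α) := Real.rpow_nonneg hn0.le _
  have hb : (0:ℝ) ≤ (n:ℝ) ^ (2*α-2) := Real.rpow_nonneg hn0.le _
  have hd : (0:ℝ) ≤ (n:ℝ) ^ (1-α) := Real.rpow_nonneg hn0.le _
  have hbd : (n:ℝ) ^ (2*α-2) * (n:ℝ) ^ (1-α) = (n:ℝ) ^ (α-1) := by
    rw [← Real.rpow_add hn0, show 2*α-2 + (1-α) = α - 1 by ring]
  have hbc : (n:ℝ) ^ (2*α-2) ≤ (n:ℝ) ^ (α-1) :=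
    Real.rpow_le_rpow_of_exponent_le hn1R (by linarith)
  have hU : ∑ k ∈ Finset.Icc 1 n, (k:ℝ) ^ (-α) ≤ 1 + (1/(1-α)) * (n:ℝ) ^ (1-α) := by
    have h1 := sum_rpow_le (s := -α) (by linarith) hn1
    rw [int_rpow_eval (by intro h; rw [neg_eq_iff_eq_neg] at h; linarith) hn1,
      show -α + 1 = 1 - α by ring] at h1
    have h2 : ((n:ℝ) ^ (1-α) - 1) / (1-α) ≤ (n:ℝ) ^ (1-α) / (1-α) := by gcongr; linarith
    calc ∑ k ∈ Finset.Icc 1 n, (k:ℝ) ^ (-α) ≤ 1 + ((n:ℝ) ^ (1-α) - 1) / (1-α) := h1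
      _ ≤ 1 + (n:ℝ) ^ (1-α) / (1-α) := by linarith
      _ = 1 + (1/(1-α)) * (n:ℝ) ^ (1-α) := by ring
  have haV : (n:ℝ) ^ (-α) ≤ max ((n:ℝ) ^ (-α)) ((n:ℝ) ^ (α-1)) := le_max_left _ _
  have hcV : (n:ℝ) ^ (α-1) ≤ max ((n:ℝ) ^ (-α)) ((n:ℝ) ^ (α-1)) := le_max_right _ _
  have hV : (0:ℝ) ≤ max ((n:ℝ) ^ (-α)) ((n:ℝ) ^ (α-1)) := le_trans ha haV
  calc ∑ j ∈ Finset.Icc 1 n, bCoeff α j n / (j:ℝ) ^ (1-α)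
      ≤ 2 * (n:ℝ) ^ (-α) * (1/α + 1 + ∑ k ∈ Finset.Icc 1 n, (k:ℝ) ^ (2*α-2))
        + 16 * (n:ℝ) ^ (2*α-2) * (1/(1-α) + 1 + ∑ k ∈ Finset.Icc 1 n, (k:ℝ) ^ (-α)) :=
        core h0 h1 hn
    _ ≤ (2*(1/α+1) + 16*(1/(1-α)+2) + 16*(1/(1-α)))
          * (max ((n:ℝ) ^ (-α)) ((n:ℝ) ^ (α-1)))
        + 2 * (n:ℝ) ^ (-α) * ∑ k ∈ Finset.Icc 1 n, (k:ℝ) ^ (2*α-2) :=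
        glue ha hb hd hbd hbc hU hiβ.le haV hcV hV hiα.le hiβ.le

set_option maxHeartbeats 1000000 in
theorem sum_bCoeff_bound (α : ℝ) (h0 : 0 < α) (h1 : α < 1) :
    ∃ C : ℝ, 0 < C ∧ ∀ n : ℕ, 1 ≤ n →
      ∑ j ∈ Finset.Icc 1 n, bCoeff α j n / (j : ℝ) ^ (1 - α) ≤ C * eta α n := by
  have h1' : (0:ℝ) < 1 - α := by linarith
  have hiα : (0:ℝ) < 1/α := by positivity
  have hiβ : (0:ℝ) < 1/(1-α) := by positivity
  have hlog2 : (0:ℝ) < Real.log 2 := Real.log_pos (by norm_num)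
  rcases lt_trichotomy α (1/2) with hlt | heq | hgt
  · -- case α < 1/2
    have h12 : (0:ℝ) < 1/(1-2*α) := by
      have : (0:ℝ) < 1 - 2*α := by linarith
      positivity
    refine ⟨(2*(1/α+1) + 16*(1/(1-α)+2) + 16*(1/(1-α))) + 2*(1 + 1/(1-2*α))
      + (2/α + 2/(1-α)), by
        have e1 : (0:ℝ) < 2/α := by positivity
        have e2 : (0:ℝ) < 2/(1-α) := by positivity
        linarith, ?_⟩
    intro n hn1
    rw [eta, if_pos hlt]
    rcases eq_or_lt_of_le hn1 with heq1 | hgt1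
    · obtain rfl : n = 1 := heq1.symm
      rw [Nat.cast_one, Real.one_rpow, mul_one]
      have hS := S_one h0 h1
      have e1 : (0:ℝ) < 2/α := by positivity
      have e2 : (0:ℝ) < 2/(1-α) := by positivity
      linarith
    · have hn : 2 ≤ n := hgt1
      have hn1R : (1:ℝ) ≤ (n:ℝ) := by exact_mod_cast hn1
      have hn0 : (0:ℝ) < (n:ℝ) := by linarith
      have ha : (0:ℝ) ≤ (n:ℝ) ^ (-α) := Real.rpow_nonneg hn0.le _
      have hca : (n:ℝ) ^ (α-1) ≤ (n:ℝ) ^ (-α) :=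
        Real.rpow_le_rpow_of_exponent_le hn1R (by linarith)
      have hmain := main_est h0 h1 n hn
      rw [max_eq_left hca] at hmain
      have hT : ∑ k ∈ Finset.Icc 1 n, (k:ℝ) ^ (2*α-2) ≤ 1 + 1/(1-2*α) := by
        have hs := sum_rpow_le (s := 2*α-2) (by linarith) hn1
        rw [int_rpow_eval (by intro h; nlinarith [h]) hn1,
          show 2*α-2 + 1 = 2*α-1 by ring] at hs
        have hy : (n:ℝ) ^ (2*α-1) ≤ 1 :=
          Real.rpow_le_one_of_one_le_of_nonpos hn1R (by linarith)
        have hy0 : (0:ℝ) ≤ (n:ℝ) ^ (2*α-1) := Real.rpow_nonneg hn0.le _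
        have heq2 : ((n:ℝ) ^ (2*α-1) - 1) / (2*α-1) = (1 - (n:ℝ) ^ (2*α-1)) / (1-2*α) := by
          rw [div_eq_div_iff (by linarith) (by linarith)]
          ring
        rw [heq2] at hs
        have hle : (1 - (n:ℝ) ^ (2*α-1)) / (1-2*α) ≤ 1/(1-2*α) := by
          rw [div_le_div_iff₀ (by linarith) (by linarith)]
          nlinarith
        linarith
      refine le_trans hmain ?_
      have step1 : 2 * (n:ℝ) ^ (-α) * (∑ k ∈ Finset.Icc 1 n, (k:ℝ) ^ (2*α-2))
          ≤ 2 * (n:ℝ) ^ (-α) * (1 + 1/(1-2*α)) :=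
        mul_le_mul_of_nonneg_left hT (by linarith)
      have hx : (0:ℝ) ≤ (2/α + 2/(1-α)) * (n:ℝ) ^ (-α) :=
        mul_nonneg (add_nonneg (div_nonneg (by norm_num) h0.le)
          (div_nonneg (by norm_num) h1'.le)) ha
      nlinarith [step1]
  · -- case α = 1/2
    subst heq
    refine ⟨112/Real.log 2 + 2, by positivity, ?_⟩
    intro n hn1
    rw [eta, if_neg (lt_irrefl _), if_pos rfl]
    rcases eq_or_lt_of_le hn1 with heq1 | hgt1
    · obtain rfl : n = 1 := heq1.symm
      rw [Nat.cast_one, Real.one_rpow, one_mul, show (1:ℝ)+1 = 2 by norm_num]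
      refine le_trans (S_one h0 h1) ?_
      rw [add_mul, div_mul_cancel₀ _ (ne_of_gt hlog2)]
      norm_num
      linarith
    · have hn : 2 ≤ n := hgt1
      have hn1R : (1:ℝ) ≤ (n:ℝ) := by exact_mod_cast hn1
      have hn0 : (0:ℝ) < (n:ℝ) := by linarith
      have ha : (0:ℝ) ≤ (n:ℝ) ^ (-(1/2):ℝ) := Real.rpow_nonneg hn0.le _
      have hmain := main_est h0 h1 n hn
      rw [show (1/2:ℝ) - 1 = -(1/2) by norm_num, max_self,
        show 2*(1/2:ℝ)-2 = -1 by norm_num,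
        show (2*(1/(1/2:ℝ)+1) + 16*(1/(1-1/2)+2) + 16*(1/(1-1/2))) = 102 by norm_num] at hmain
      have hT : ∑ k ∈ Finset.Icc 1 n, (k:ℝ) ^ (-1:ℝ) ≤ 1 + Real.log ((n:ℝ)+1) := by
        have hs := sum_rpow_le (s := (-1:ℝ)) (by norm_num) hn1
        rw [int_rpow_eval_neg_one hn1] at hs
        have : Real.log (n:ℝ) ≤ Real.log ((n:ℝ)+1) :=
          Real.log_le_log hn0 (by linarith)
        linarith
      have hlog : Real.log 2 ≤ Real.log ((n:ℝ)+1) :=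
        Real.log_le_log (by norm_num) (by push_cast; exact_mod_cast by linarith : (2:ℝ) ≤ (n:ℝ)+1)
      have hlogpos : (0:ℝ) < Real.log ((n:ℝ)+1) := lt_of_lt_of_le hlog2 hlog
      have key : 104 * (n:ℝ) ^ (-(1/2):ℝ)
          ≤ 104/Real.log 2 * ((n:ℝ) ^ (-(1/2):ℝ) * Real.log ((n:ℝ)+1)) := by
        rw [div_mul_eq_mul_div, le_div_iff₀ hlog2]
        nlinarith [mul_le_mul_of_nonneg_left hlog ha]
      refine le_trans hmain ?_
      have step1 : 2 * (n:ℝ) ^ (-(1/2):ℝ) * (∑ k ∈ Finset.Icc 1 n, (k:ℝ) ^ (-1:ℝ))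
          ≤ 2 * (n:ℝ) ^ (-(1/2):ℝ) * (1 + Real.log ((n:ℝ)+1)) :=
        mul_le_mul_of_nonneg_left hT (by linarith)
      have h8 : (0:ℝ) ≤ 8/Real.log 2 * ((n:ℝ) ^ (-(1/2):ℝ) * Real.log ((n:ℝ)+1)) := by
        positivity
      have e1 : (112/Real.log 2 + 2) * ((n:ℝ) ^ (-(1/2):ℝ) * Real.log ((n:ℝ)+1))
          = 104/Real.log 2 * ((n:ℝ) ^ (-(1/2):ℝ) * Real.log ((n:ℝ)+1))
            + 8/Real.log 2 * ((n:ℝ) ^ (-(1/2):ℝ) * Real.log ((n:ℝ)+1))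
            + 2 * ((n:ℝ) ^ (-(1/2):ℝ) * Real.log ((n:ℝ)+1)) := by ring
      have e2 : 2 * (n:ℝ) ^ (-(1/2):ℝ) * (1 + Real.log ((n:ℝ)+1))
          = 2 * (n:ℝ) ^ (-(1/2):ℝ)
            + 2 * ((n:ℝ) ^ (-(1/2):ℝ) * Real.log ((n:ℝ)+1)) := by ring
      linarith [step1, key, h8]
  · -- case α > 1/2
    have h2α : (0:ℝ) < 2*α - 1 := by linarith
    have hne1 : ¬ (α < 1/2) := by linarith
    have hne2 : α ≠ 1/2 := by intro h; rw [h] at hgt; exact lt_irrefl _ hgt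
    refine ⟨(2*(1/α+1) + 16*(1/(1-α)+2) + 16*(1/(1-α))) + 2 + 2/(2*α-1)
      + (2/α + 2/(1-α)), by
        have e1 : (0:ℝ) < 2/α := by positivity
        have e2 : (0:ℝ) < 2/(1-α) := by positivity
        have e3 : (0:ℝ) < 2/(2*α-1) := by positivity
        linarith, ?_⟩
    intro n hn1
    rw [eta, if_neg hne1, if_neg hne2, show -(1-α) = α - 1 by ring]
    rcases eq_or_lt_of_le hn1 with heq1 | hgt1
    · obtain rfl : n = 1 := heq1.symm
      rw [Nat.cast_one, Real.one_rpow, mul_one]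
      have hS := S_one h0 h1
      have e1 : (0:ℝ) < 2/α := by positivity
      have e2 : (0:ℝ) < 2/(1-α) := by positivity
      have e3 : (0:ℝ) < 2/(2*α-1) := by positivity
      linarith
    · have hn : 2 ≤ n := hgt1
      have hn1R : (1:ℝ) ≤ (n:ℝ) := by exact_mod_cast hn1
      have hn0 : (0:ℝ) < (n:ℝ) := by linarith
      have ha : (0:ℝ) ≤ (n:ℝ) ^ (-α) := Real.rpow_nonneg hn0.le _
      have hc : (0:ℝ) ≤ (n:ℝ) ^ (α-1) := Real.rpow_nonneg hn0.le _
      have hac : (n:ℝ) ^ (-α) ≤ (n:ℝ) ^ (α-1) :=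
        Real.rpow_le_rpow_of_exponent_le hn1R (by linarith)
      have hmain := main_est h0 h1 n hn
      rw [max_eq_right hac] at hmain
      have hT : ∑ k ∈ Finset.Icc 1 n, (k:ℝ) ^ (2*α-2)
          ≤ 1 + (1/(2*α-1)) * (n:ℝ) ^ (2*α-1) := by
        have hs := sum_rpow_le (s := 2*α-2) (by linarith) hn1
        rw [int_rpow_eval (by intro h; nlinarith [h]) hn1,
          show 2*α-2 + 1 = 2*α-1 by ring] at hs
        have : ((n:ℝ) ^ (2*α-1) - 1) / (2*α-1) ≤ (n:ℝ) ^ (2*α-1) / (2*α-1) := by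
          gcongr
          linarith
        calc ∑ k ∈ Finset.Icc 1 n, (k:ℝ) ^ (2*α-2)
            ≤ 1 + ((n:ℝ) ^ (2*α-1) - 1) / (2*α-1) := hs
          _ ≤ 1 + (n:ℝ) ^ (2*α-1) / (2*α-1) := by linarith
          _ = 1 + (1/(2*α-1)) * (n:ℝ) ^ (2*α-1) := by ring
      have hprod : (n:ℝ) ^ (-α) * (n:ℝ) ^ (2*α-1) = (n:ℝ) ^ (α-1) := by
        rw [← Real.rpow_add hn0, show -α + (2*α-1) = α-1 by ring]
      have hyn : (0:ℝ) ≤ (n:ℝ) ^ (2*α-1) := Real.rpow_nonneg hn0.le _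
      refine le_trans hmain ?_
      have step1 : 2 * (n:ℝ) ^ (-α) * (∑ k ∈ Finset.Icc 1 n, (k:ℝ) ^ (2*α-2))
          ≤ 2 * (n:ℝ) ^ (-α) * (1 + (1/(2*α-1)) * (n:ℝ) ^ (2*α-1)) :=
        mul_le_mul_of_nonneg_left hT (by linarith)
      have step2 : 2 * (n:ℝ) ^ (-α) * (1 + (1/(2*α-1)) * (n:ℝ) ^ (2*α-1))
          = 2 * (n:ℝ) ^ (-α) + (2/(2*α-1)) * ((n:ℝ) ^ (-α) * (n:ℝ) ^ (2*α-1)) := by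
        ring
      rw [step2, hprod] at step1
      have hx : (0:ℝ) ≤ (2/α + 2/(1-α)) * (n:ℝ) ^ (α-1) :=
        mul_nonneg (add_nonneg (div_nonneg (by norm_num) h0.le)
          (div_nonneg (by norm_num) h1'.le)) hc
      have hq : (0:ℝ) ≤ 2/(2*α-1) := by positivity
      nlinarith [step1, mul_le_mul_of_nonneg_left hac hq]
end

section
/- For α ∈ (0,1), the m-th derivative of the function t ↦ E_α(t^α) on (0,∞) equals t^{-m} E_{α,1-m}(t^α) for every integer m ≥ 1, where E_{α,β}(z) = ∑_{n≥0} z^n / Γ(αn + β) is the generalized Mittag–Leffler function (terms with nonpositive Γ-argument interpreted via 1/Γ extended by 0 at nonpositive integers). -/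
open Real

/-- The generalized Mittag–Leffler function `E_{α,β}(z) = ∑ z^n / Γ(αn+β)`, where `1/Γ` is
interpreted as `0` at nonpositive integers (Mathlib's `Real.Gamma` vanishes there). -/
noncomputable def mittagLeffler (α β : ℝ) (z : ℝ) : ℝ :=
  ∑' n : ℕ, z ^ n / Real.Gamma (α * n + β)

open Filter


private lemma recip_gamma (x : ℝ) : x / Real.Gamma (x + 1) = 1 / Real.Gamma x := by
  rcases eq_or_ne x 0 with h | h
  · simp [h, Real.Gamma_zero]
  · rw [Real.Gamma_add_one h, div_mul_cancel_left₀ h, one_div]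

private lemma gamma_ratio (α x : ℝ) (h0 : 0 < α) (hx : 2 ≤ x) :
    Real.Gamma x * (x - 1) ^ α ≤ Real.Gamma (x + α) := by
  have hx1 : (0:ℝ) < x - 1 := by linarith
  have hxpos : (0:ℝ) < x := by linarith
  have hxa : (0:ℝ) < x + α := by linarith
  have h1a : (0:ℝ) < 1 + α := by linarith
  have ha : (0:ℝ) ≤ α / (1 + α) := by positivity
  have hb : (0:ℝ) ≤ 1 / (1 + α) := by positivity
  have hab : α / (1 + α) + 1 / (1 + α) = 1 := by field_simp; ring
  have hc := Real.convexOn_log_Gamma.2 (Set.mem_Ioi.2 hx1) (Set.mem_Ioi.2 hxa) ha hb hab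
  have harg : (α / (1 + α)) • (x - 1) + (1 / (1 + α)) • (x + α) = x := by
    simp only [smul_eq_mul]
    field_simp
    ring
  rw [harg] at hc
  simp only [Function.comp_apply, smul_eq_mul] at hc
  have hGpos : 0 < Real.Gamma (x - 1) := Real.Gamma_pos_of_pos hx1
  have hGxpos : 0 < Real.Gamma x := Real.Gamma_pos_of_pos hxpos
  have hGxapos : 0 < Real.Gamma (x + α) := Real.Gamma_pos_of_pos hxa
  have hG1 : Real.Gamma x = (x - 1) * Real.Gamma (x - 1) := by
    have h := Real.Gamma_add_one (s := x - 1) (ne_of_gt hx1)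
    rw [sub_add_cancel] at h
    exact h
  have hlog : Real.log (Real.Gamma (x - 1)) = Real.log (Real.Gamma x) - Real.log (x - 1) := by
    rw [hG1, Real.log_mul (ne_of_gt hx1) (ne_of_gt hGpos)]; ring
  -- multiply hc by (1+α)
  have hc' : Real.log (Real.Gamma x) * (1 + α)
      ≤ α * Real.log (Real.Gamma (x - 1)) + Real.log (Real.Gamma (x + α)) := by
    rw [div_mul_eq_mul_div, div_mul_eq_mul_div, ← add_div, le_div_iff₀ h1a] at hc
    linarith [hc]
  have key : Real.log (Real.Gamma x) + α * Real.log (x - 1) ≤ Real.log (Real.Gamma (x + α)) := by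
    have : α * Real.log (Real.Gamma (x - 1))
        = α * Real.log (Real.Gamma x) - α * Real.log (x - 1) := by rw [hlog]; ring
    nlinarith [hc']
  calc Real.Gamma x * (x - 1) ^ α
      = Real.exp (Real.log (Real.Gamma x) + α * Real.log (x - 1)) := by
        rw [Real.exp_add, Real.exp_log hGxpos, Real.rpow_def_of_pos hx1, mul_comm (Real.log (x-1)) α]
    _ ≤ Real.exp (Real.log (Real.Gamma (x + α))) := Real.exp_le_exp.2 key
    _ = Real.Gamma (x + α) := Real.exp_log hGxapos

private lemma ev_ge (α : ℝ) (h0 : 0 < α) (L : ℝ) : ∀ᶠ n : ℕ in atTop, L ≤ α * n := by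
  filter_upwards [eventually_ge_atTop ⌈L / α⌉₊] with n hn
  have h2 : L / α ≤ (n : ℝ) := le_trans (Nat.le_ceil _) (by exact_mod_cast hn)
  calc L = α * (L / α) := by field_simp
    _ ≤ α * n := by nlinarith

private lemma summable_master (α β d C : ℝ) (h0 : 0 < α) (h1 : α < 1) (hd : 1 ≤ d)
    (hC : 1 ≤ C) :
    Summable (fun n : ℕ => (α * n + d) * C ^ n / |Real.Gamma (α * n + β)|) := by
  apply summable_of_ratio_norm_eventually_le (r := 1/2) (by norm_num)
  filter_upwards [ev_ge α h0 (2 - β), ev_ge α h0 ((4 * C) ^ α⁻¹ + 1 - β)] with n hn2 hnK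
  have hx2 : 2 ≤ α * n + β := by linarith
  have hxpos : (0:ℝ) < α * n + β := by linarith
  have hGpos : 0 < Real.Gamma (α * n + β) := Real.Gamma_pos_of_pos hxpos
  have hn1 : α * ((n : ℝ) + 1) + β = (α * n + β) + α := by ring
  have hGpos' : 0 < Real.Gamma ((α * n + β) + α) := Real.Gamma_pos_of_pos (by linarith)
  have hrat := gamma_ratio α (α * n + β) h0 hx2
  have h4C : 4 * C ≤ (α * n + β - 1) ^ α := by
    calc 4 * C = ((4 * C) ^ α⁻¹) ^ α := by
          rw [Real.rpow_inv_rpow (by linarith) (ne_of_gt h0)]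
      _ ≤ (α * n + β - 1) ^ α :=
          Real.rpow_le_rpow (by positivity) (by linarith) h0.le
  have hCn : (0:ℝ) < C ^ n := by positivity
  have hd1 : (1:ℝ) ≤ α * n + d := by nlinarith [Nat.cast_nonneg (α := ℝ) n]
  have hfact : α * ((n : ℝ) + 1) + d ≤ 2 * (α * n + d) := by nlinarith [Nat.cast_nonneg (α := ℝ) n]
  have key : (α * ((n:ℝ) + 1) + d) * C ^ (n+1) * Real.Gamma (α * n + β)
      ≤ (1/2 * ((α * n + d) * C ^ n)) * Real.Gamma ((α * n + β) + α) := by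
    calc (α * ((n:ℝ) + 1) + d) * C ^ (n+1) * Real.Gamma (α * n + β)
        ≤ (2 * (α * n + d)) * C ^ (n+1) * Real.Gamma (α * n + β) := by
          apply mul_le_mul_of_nonneg_right (mul_le_mul_of_nonneg_right hfact (by positivity)) hGpos.le
      _ = (1/2 * ((α * n + d) * C ^ n)) * (Real.Gamma (α * n + β) * (4 * C)) := by ring
      _ ≤ (1/2 * ((α * n + d) * C ^ n)) * (Real.Gamma (α * n + β) * (α * n + β - 1) ^ α) := by
          apply mul_le_mul_of_nonneg_left (mul_le_mul_of_nonneg_left h4C hGpos.le) (by positivity)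
      _ ≤ (1/2 * ((α * n + d) * C ^ n)) * Real.Gamma ((α * n + β) + α) := by
          apply mul_le_mul_of_nonneg_left hrat (by positivity)
  have e1 : ‖(α * ((n:ℕ)+1 : ℕ) + d) * C ^ (n+1) / |Real.Gamma (α * ((n:ℕ)+1:ℕ) + β)|‖
      = (α * ((n:ℝ) + 1) + d) * C ^ (n+1) / Real.Gamma ((α * n + β) + α) := by
    push_cast
    rw [hn1, abs_of_pos hGpos', Real.norm_eq_abs, abs_of_nonneg (by positivity)]
  have e2 : ‖(α * n + d) * C ^ n / |Real.Gamma (α * n + β)|‖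
      = (α * n + d) * C ^ n / Real.Gamma (α * n + β) := by
    rw [abs_of_pos hGpos, Real.norm_eq_abs, abs_of_nonneg (by positivity)]
  rw [e1, e2, show (1/2:ℝ) * ((α * ↑n + d) * C ^ n / Real.Gamma (α * ↑n + β))
      = (1/2 * ((α * ↑n + d) * C ^ n)) / Real.Gamma (α * ↑n + β) from (mul_div_assoc _ _ _).symm,
    div_le_div_iff₀ hGpos' hGpos]
  exact key

noncomputable def F (α : ℝ) (m : ℕ) (t : ℝ) : ℝ :=
  ∑' n : ℕ, t ^ (α * n - m) / Real.Gamma (α * n + 1 - m)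

set_option maxHeartbeats 1000000 in
private lemma hasDerivAt_F (α : ℝ) (h0 : 0 < α) (h1 : α < 1) (m : ℕ) (t : ℝ) (ht : 0 < t) :
    HasDerivAt (F α m) (F α (m + 1) t) t := by
  set C : ℝ := max 1 (2 * t) with hCdef
  have hC : 1 ≤ C := le_max_left _ _
  have hCpos : 0 < C := lt_of_lt_of_le one_pos hC
  set A : ℝ := (t / 2) ^ (-((m : ℝ) + 1)) with hAdef
  have hApos : 0 < A := Real.rpow_pos_of_pos (by linarith) _
  set g : ℕ → ℝ → ℝ := fun n s => s ^ (α * n - m) / Real.Gamma (α * n + 1 - m) with hgdef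
  set g' : ℕ → ℝ → ℝ :=
    fun n s => (α * n - m) * s ^ (α * n - m - 1) / Real.Gamma (α * n + 1 - m) with hg'def
  set u : ℕ → ℝ := fun n => A * ((α * n + (m + 1)) * C ^ n / |Real.Gamma (α * n + 1 - m)|)
    with hudef
  have hu : Summable u := by
    apply Summable.mul_left
    have hs := summable_master α (1 - (m : ℝ)) ((m : ℝ) + 1) C h0 h1 (by linarith [Nat.cast_nonneg (α := ℝ) m]) hC
    exact hs.congr fun n => by rw [show α * (n:ℝ) + (1 - (m:ℝ)) = α * n + 1 - m from by ring]
  have hg : ∀ n : ℕ, ∀ y ∈ Set.Ioo (t / 2) (2 * t), HasDerivAt (g n) (g' n y) y := by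
    intro n y hy
    exact (Real.hasDerivAt_rpow_const (Or.inl (ne_of_gt (by linarith [hy.1])))).div_const _
  have hg' : ∀ n : ℕ, ∀ y ∈ Set.Ioo (t / 2) (2 * t), ‖g' n y‖ ≤ u n := by
    intro n y hy
    have hypos : 0 < y := by linarith [hy.1]
    have hn0 : (0:ℝ) ≤ (n:ℝ) := Nat.cast_nonneg n
    rcases eq_or_ne (Real.Gamma (α * n + 1 - m)) 0 with hG | hG
    · simp [hg'def, hG]
      all_goals positivity
    have hGabs : 0 < |Real.Gamma (α * n + 1 - m)| := abs_pos.2 hG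
    have e : ‖g' n y‖ = |α * n - m| * y ^ (α * n - m - 1) / |Real.Gamma (α * n + 1 - m)| := by
      rw [hg'def, Real.norm_eq_abs, abs_div, abs_mul, abs_of_pos (Real.rpow_pos_of_pos hypos _)]
    rw [e]
    have erhs : u n = (α * n + (m + 1)) * C ^ n * A / |Real.Gamma (α * n + 1 - m)| := by
      simp only [hudef]; ring
    rw [erhs, div_le_div_iff₀ hGabs hGabs]
    apply mul_le_mul_of_nonneg_right _ hGabs.le
    have h1' : |α * n - m| ≤ α * n + (m + 1) := by
      rw [abs_sub_le_iff]
      constructor <;> nlinarith [h0.le]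
    have h2' : y ^ (α * n - m - 1) ≤ C ^ n * A := by
      have hsplit : y ^ (α * n - (m:ℝ) - 1) = y ^ (α * n) * y ^ (-((m:ℝ) + 1)) := by
        rw [← Real.rpow_add hypos]; congr 1; ring
      rw [hsplit]
      have hb1 : y ^ (α * n) ≤ C ^ n := by
        calc y ^ (α * n) ≤ C ^ (α * n) :=
              Real.rpow_le_rpow hypos.le (le_trans (by linarith [hy.2]) (le_max_right 1 (2*t)))
                (by positivity)
          _ ≤ C ^ ((n : ℝ)) := Real.rpow_le_rpow_of_exponent_le hC (by nlinarith)
          _ = C ^ n := Real.rpow_natCast C n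
      have hb2 : y ^ (-((m:ℝ) + 1)) ≤ A := by
        rw [hAdef, Real.rpow_neg hypos.le, Real.rpow_neg (by linarith : (0:ℝ) ≤ t / 2)]
        apply inv_anti₀ (Real.rpow_pos_of_pos (by linarith) _)
        exact Real.rpow_le_rpow (by linarith) hy.1.le (by positivity)
      calc y ^ (α * n) * y ^ (-((m:ℝ) + 1)) ≤ C ^ n * y ^ (-((m:ℝ) + 1)) :=
            mul_le_mul_of_nonneg_right hb1 (Real.rpow_pos_of_pos hypos _).le
        _ ≤ C ^ n * A := mul_le_mul_of_nonneg_left hb2 (by positivity)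
    calc |α * n - m| * y ^ (α * n - m - 1) ≤ (α * n + (m + 1)) * (C ^ n * A) := by
          apply mul_le_mul h1' h2' (Real.rpow_pos_of_pos hypos _).le (by positivity)
      _ = (α * n + (m + 1)) * C ^ n * A := by ring
  have hg0 : Summable (fun n => g n t) := by
    apply Summable.of_norm_bounded ((summable_master α (1 - (m : ℝ)) 1 C h0 h1 le_rfl hC).mul_left
      (t ^ (-(m : ℝ))))
    intro n
    have hn0 : (0:ℝ) ≤ (n:ℝ) := Nat.cast_nonneg n
    rcases eq_or_ne (Real.Gamma (α * n + 1 - m)) 0 with hG | hG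
    · simp [hgdef, hG]
      all_goals positivity
    have hGabs : 0 < |Real.Gamma (α * n + 1 - m)| := abs_pos.2 hG
    have e : ‖g n t‖ = t ^ (α * n - m) / |Real.Gamma (α * n + 1 - m)| := by
      rw [hgdef, Real.norm_eq_abs, abs_div, abs_of_pos (Real.rpow_pos_of_pos ht _)]
    rw [e]
    have harg : α * (n:ℝ) + (1 - m) = α * n + 1 - m := by ring
    show _ ≤ t ^ (-(m:ℝ)) * ((α * n + 1) * C ^ n / |Real.Gamma (α * n + (1 - (m:ℝ)))|)
    rw [show t ^ (-(m:ℝ)) * ((α * n + 1) * C ^ n / |Real.Gamma (α * n + (1 - (m:ℝ)))|)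
      = (α * n + 1) * C ^ n * t ^ (-(m:ℝ)) / |Real.Gamma (α * n + 1 - m)| from by rw [harg]; ring]
    rw [div_le_div_iff₀ hGabs hGabs]
    apply mul_le_mul_of_nonneg_right _ hGabs.le
    have hsplit : t ^ (α * n - (m:ℝ)) = t ^ (α * n) * t ^ (-(m:ℝ)) := by
      rw [sub_eq_add_neg, Real.rpow_add ht]
    rw [hsplit]
    have hb1 : t ^ (α * n) ≤ C ^ n := by
      calc t ^ (α * n) ≤ C ^ (α * n) :=
            Real.rpow_le_rpow ht.le (le_trans (by linarith) (le_max_right 1 (2*t))) (by positivity)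
        _ ≤ C ^ ((n : ℝ)) := Real.rpow_le_rpow_of_exponent_le hC (by nlinarith)
        _ = C ^ n := Real.rpow_natCast C n
    calc t ^ (α * n) * t ^ (-(m:ℝ)) ≤ C ^ n * t ^ (-(m:ℝ)) :=
          mul_le_mul_of_nonneg_right hb1 (Real.rpow_pos_of_pos ht _).le
      _ ≤ (α * n + 1) * C ^ n * t ^ (-(m:ℝ)) := by
          nlinarith [mul_nonneg (mul_nonneg h0.le hn0)
            (mul_pos (pow_pos hCpos n) (Real.rpow_pos_of_pos ht (-(m:ℝ)))).le]
  have ht_mem : t ∈ Set.Ioo (t / 2) (2 * t) := ⟨by linarith, by linarith⟩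
  have H := hasDerivAt_tsum_of_isPreconnected hu isOpen_Ioo
    (convex_Ioo _ _).isPreconnected hg hg' ht_mem hg0 ht_mem
  have : (∑' n, g' n t) = F α (m + 1) t := by
    apply tsum_congr
    intro n
    show (α * ↑n - ↑m) * t ^ (α * ↑n - ↑m - 1) / Real.Gamma (α * ↑n + 1 - ↑m)
      = t ^ (α * ↑n - ↑(m + 1)) / Real.Gamma (α * ↑n + 1 - ↑(m + 1))
    have e1 : (α * n - m) * t ^ (α * n - m - 1) / Real.Gamma (α * n + 1 - m)
        = t ^ (α * n - m - 1) * ((α * n - m) / Real.Gamma ((α * n - m) + 1)) := by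
      rw [show α * (n:ℝ) + 1 - m = (α * n - m) + 1 from by ring]; ring
    rw [e1, recip_gamma, mul_one_div]
    congr 1
    · congr 1; push_cast; ring
    · congr 1; push_cast; ring
  have hFeq : (fun z => ∑' n, g n z) = F α m := by
    funext z
    simp only [hgdef, F]
  rw [hFeq, this] at H
  exact H

private lemma F_eq (α : ℝ) (m : ℕ) (t : ℝ) (ht : 0 < t) :
    t ^ (-(m : ℝ)) * mittagLeffler α (1 - m) (t ^ α) = F α m t := by
  rw [mittagLeffler, F, ← tsum_mul_left]
  apply tsum_congr
  intro n
  rw [← Real.rpow_natCast (t ^ α) n, ← Real.rpow_mul ht.le, mul_div_assoc',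
    ← Real.rpow_add ht]
  congr 1
  · congr 1; ring
  · congr 1; ring

private lemma main_ind (α : ℝ) (h0 : 0 < α) (h1 : α < 1) (m : ℕ) :
    ∀ t : ℝ, 0 < t →
      iteratedDeriv m (fun s : ℝ => mittagLeffler α 1 (s ^ α)) t = F α m t := by
  induction m with
  | zero =>
    intro t ht
    rw [iteratedDeriv_zero]
    have h := F_eq α 0 t ht
    simpa using h
  | succ m ih =>
    intro t ht
    rw [iteratedDeriv_succ]
    have hev : iteratedDeriv m (fun s : ℝ => mittagLeffler α 1 (s ^ α)) =ᶠ[nhds t] F α m := by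
      filter_upwards [Ioi_mem_nhds ht] with s hs using ih s hs
    rw [hev.deriv_eq]
    exact (hasDerivAt_F α h0 h1 m t ht).deriv

theorem iteratedDeriv_mittagLeffler (α : ℝ) (h0 : 0 < α) (h1 : α < 1) (m : ℕ) (hm : 1 ≤ m)
    (t : ℝ) (ht : 0 < t) :
    iteratedDeriv m (fun s : ℝ => mittagLeffler α 1 (s ^ α)) t =
      t ^ (-(m : ℝ)) * mittagLeffler α (1 - m) (t ^ α) := by
  rw [F_eq α m t ht]
  exact main_ind α h0 h1 m t ht
end

section
/- For α ∈ (0,1) and n ≥ 1, define a_{0n} = −(α/Γ(1−α)) b_{1n}, a_{jn} = (α/Γ(1−α)) ( b_{jn}/(j^α−(j−1)^α) − b_{j+1,n}/((j+1)^α − j^α) ) for 1 ≤ j ≤ n−1, and a_{nn} = (α/Γ(1−α)) b_{nn}/(n^α−(n−1)^α), where b_{jn} = ∫_{j−1}^{j} x^{α−1}(n−x)^{−α} dx. Then a_{0n} < 0, a_{nn} > 0, and a_{jn} ≤ 0 for 1 ≤ j ≤ n−1. -/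
open Real

/-- The coefficients `a_{jn}` of the finite difference scheme. -/
noncomputable def aCoeff (α : ℝ) (j n : ℕ) : ℝ :=
  if j = 0 then -(α / Real.Gamma (1 - α)) * bCoeff α 1 n
  else if j = n then
    (α / Real.Gamma (1 - α)) * bCoeff α n n / ((n : ℝ) ^ α - ((n : ℝ) - 1) ^ α)
  else (α / Real.Gamma (1 - α)) *
    (bCoeff α j n / ((j : ℝ) ^ α - ((j : ℝ) - 1) ^ α) -
      bCoeff α (j + 1) n / (((j : ℝ) + 1) ^ α - (j : ℝ) ^ α))

open MeasureTheory intervalIntegral Set in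
/-- Integrability of the integrand on any subinterval of `[0, n]`. -/
lemma integrand_intervalIntegrable {α : ℝ} (h0 : 0 < α) (h1 : α < 1) {n : ℕ} {a b : ℝ}
    (ha : 0 ≤ a) (hb : b ≤ (n : ℝ)) (hab : a ≤ b) :
    IntervalIntegrable (fun x => x ^ (α - 1) * ((n : ℝ) - x) ^ (-α)) volume a b := by
  rcases eq_or_lt_of_le hab with rfl | hab
  · exact IntervalIntegrable.refl
  set m := (a + b) / 2 with hm
  have ham : a ≤ m := by simp only [hm]; linarith
  have hmb : m ≤ b := by simp only [hm]; linarith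
  have hmpos : 0 < m := by simp only [hm]; linarith
  have hmlt : m < (n : ℝ) := by simp only [hm]; linarith
  have part1 : IntervalIntegrable (fun x => x ^ (α - 1) * ((n : ℝ) - x) ^ (-α)) volume a m := by
    refine (intervalIntegrable_rpow' (by linarith : (-1 : ℝ) < α - 1)).mul_continuousOn ?_
    refine ContinuousOn.rpow_const ((continuous_const.sub continuous_id).continuousOn) ?_
    intro x hx
    rw [uIcc_of_le ham] at hx
    refine Or.inl ?_
    show (n : ℝ) - x ≠ 0
    have := hx.2
    intro h; nlinarith
  have part2 : IntervalIntegrable (fun x => x ^ (α - 1) * ((n : ℝ) - x) ^ (-α)) volume m b := by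
    have h2 : IntervalIntegrable (fun y : ℝ => y ^ (-α)) volume ((n : ℝ) - m) ((n : ℝ) - b) :=
      intervalIntegrable_rpow' (by linarith)
    have h3 := h2.comp_sub_left (n : ℝ)
    simp only [sub_sub_cancel] at h3
    refine h3.continuousOn_mul ?_
    refine ContinuousOn.rpow_const continuousOn_id ?_
    intro x hx
    rw [uIcc_of_le hmb] at hx
    refine Or.inl ?_
    show x ≠ 0
    exact ne_of_gt (lt_of_lt_of_le hmpos hx.1)
  exact part1.trans part2

open MeasureTheory intervalIntegral Set in
lemma bCoeff_pos {α : ℝ} (h0 : 0 < α) (h1 : α < 1) {j n : ℕ} (hj : 1 ≤ j) (hjn : j ≤ n) :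
    0 < bCoeff α j n := by
  have hj' : (1 : ℝ) ≤ (j : ℝ) := by exact_mod_cast hj
  have hjn' : (j : ℝ) ≤ (n : ℝ) := by exact_mod_cast hjn
  refine intervalIntegral_pos_of_pos_on
    (integrand_intervalIntegrable h0 h1 (by linarith) hjn' (by linarith)) ?_ (by linarith)
  intro x hx
  have hx1 : 0 < x := by have := hx.1; linarith
  have hx2 : 0 < (n : ℝ) - x := by have := hx.2; linarith
  exact mul_pos (rpow_pos_of_pos hx1 _) (rpow_pos_of_pos hx2 _)

lemma integral_rpow_interval {α : ℝ} (h0 : 0 < α) (h1 : α < 1) (a b : ℝ) :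
    ∫ x in a..b, x ^ (α - 1) = (b ^ α - a ^ α) / α := by
  have h : α - 1 + 1 = α := by ring
  rw [integral_rpow (Or.inl (by linarith : (-1 : ℝ) < α - 1)), h]

open MeasureTheory intervalIntegral Set in
/-- Upper bound: `b_{jn} ≤ (n-j)^{-α} (j^α - (j-1)^α)/α` for `1 ≤ j < n`. -/
lemma bCoeff_upper {α : ℝ} (h0 : 0 < α) (h1 : α < 1) {j n : ℕ} (hj : 1 ≤ j) (hjn : j < n) :
    bCoeff α j n ≤ ((n : ℝ) - (j : ℝ)) ^ (-α) * (((j : ℝ)) ^ α - ((j : ℝ) - 1) ^ α) / α := by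
  have hj' : (1 : ℝ) ≤ (j : ℝ) := by exact_mod_cast hj
  have hjn' : (j : ℝ) < (n : ℝ) := by exact_mod_cast hjn
  have hInt : IntervalIntegrable (fun x => x ^ (α - 1) * ((n : ℝ) - x) ^ (-α)) volume
      ((j : ℝ) - 1) (j : ℝ) :=
    integrand_intervalIntegrable h0 h1 (by linarith) (by linarith) (by linarith)
  have hgInt : IntervalIntegrable (fun x : ℝ => x ^ (α - 1) * ((n : ℝ) - (j : ℝ)) ^ (-α)) volume
      ((j : ℝ) - 1) (j : ℝ) :=
    (intervalIntegrable_rpow' (by linarith : (-1 : ℝ) < α - 1)).mul_const _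
  have hmono : bCoeff α j n ≤ ∫ x in ((j : ℝ) - 1)..(j : ℝ),
      x ^ (α - 1) * ((n : ℝ) - (j : ℝ)) ^ (-α) := by
    refine integral_mono_on (by linarith) hInt hgInt ?_
    intro x hx
    have hx0 : 0 ≤ x := by have := hx.1; linarith
    refine mul_le_mul_of_nonneg_left ?_ (rpow_nonneg hx0 _)
    exact rpow_le_rpow_of_nonpos (by linarith) (by have := hx.2; linarith) (by linarith)
  calc bCoeff α j n ≤ _ := hmono
    _ = ((n : ℝ) - (j : ℝ)) ^ (-α) * (((j : ℝ)) ^ α - ((j : ℝ) - 1) ^ α) / α := by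
        rw [intervalIntegral.integral_mul_const, integral_rpow_interval h0 h1]
        ring

open MeasureTheory intervalIntegral Set in
/-- Lower bound: `(n-j)^{-α} ((j+1)^α - j^α)/α ≤ b_{j+1,n}` for `j + 1 ≤ n`. -/
lemma bCoeff_lower {α : ℝ} (h0 : 0 < α) (h1 : α < 1) {j n : ℕ} (hjn : j + 1 ≤ n) :
    ((n : ℝ) - (j : ℝ)) ^ (-α) * (((j : ℝ) + 1) ^ α - ((j : ℝ)) ^ α) / α ≤
      bCoeff α (j + 1) n := by
  have hjn' : (j : ℝ) + 1 ≤ (n : ℝ) := by exact_mod_cast hjn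
  have hb : bCoeff α (j + 1) n =
      ∫ x in ((j : ℝ))..((j : ℝ) + 1), x ^ (α - 1) * ((n : ℝ) - x) ^ (-α) := by
    simp only [bCoeff, Nat.cast_add, Nat.cast_one, add_sub_cancel_right]
  have hInt : IntervalIntegrable (fun x => x ^ (α - 1) * ((n : ℝ) - x) ^ (-α)) volume
      (j : ℝ) ((j : ℝ) + 1) :=
    integrand_intervalIntegrable h0 h1 (by positivity) (by linarith) (by linarith)
  have hgInt : IntervalIntegrable (fun x : ℝ => x ^ (α - 1) * ((n : ℝ) - (j : ℝ)) ^ (-α)) volume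
      (j : ℝ) ((j : ℝ) + 1) :=
    (intervalIntegrable_rpow' (by linarith : (-1 : ℝ) < α - 1)).mul_const _
  have hae : (fun x : ℝ => x ^ (α - 1) * ((n : ℝ) - (j : ℝ)) ^ (-α)) ≤ᵐ[volume.restrict
      (Icc (j : ℝ) ((j : ℝ) + 1))] fun x => x ^ (α - 1) * ((n : ℝ) - x) ^ (-α) := by
    have h1' : ∀ᵐ x ∂(volume.restrict (Icc (j : ℝ) ((j : ℝ) + 1))),
        x ∈ Icc (j : ℝ) ((j : ℝ) + 1) := ae_restrict_mem measurableSet_Icc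
    have h2' : ∀ᵐ x ∂(volume.restrict (Icc (j : ℝ) ((j : ℝ) + 1))), x ≠ (j : ℝ) + 1 := by
      refine ae_restrict_of_ae ?_
      have hs : {x : ℝ | ¬ x ≠ (j : ℝ) + 1} = {(j : ℝ) + 1} := by ext y; simp
      rw [ae_iff, hs]
      exact measure_singleton _
    filter_upwards [h1', h2'] with x hx hne
    have hx0 : 0 ≤ x := le_trans (Nat.cast_nonneg j) hx.1
    have hxlt : x < (j : ℝ) + 1 := lt_of_le_of_ne hx.2 hne
    refine mul_le_mul_of_nonneg_left ?_ (rpow_nonneg hx0 _)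
    exact rpow_le_rpow_of_nonpos (by linarith) (by have := hx.1; linarith) (by linarith)
  have hmono := integral_mono_ae_restrict (by linarith : (j : ℝ) ≤ (j : ℝ) + 1) hgInt hInt hae
  rw [hb]
  calc ((n : ℝ) - (j : ℝ)) ^ (-α) * (((j : ℝ) + 1) ^ α - ((j : ℝ)) ^ α) / α
      = ∫ x in ((j : ℝ))..((j : ℝ) + 1), x ^ (α - 1) * ((n : ℝ) - (j : ℝ)) ^ (-α) := by
        rw [intervalIntegral.integral_mul_const, integral_rpow_interval h0 h1]; ring
    _ ≤ _ := hmono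

theorem aCoeff_signs (α : ℝ) (h0 : 0 < α) (h1 : α < 1) (n : ℕ) (hn : 1 ≤ n) :
    aCoeff α 0 n < 0 ∧ 0 < aCoeff α n n ∧
      ∀ j : ℕ, 1 ≤ j → j ≤ n - 1 → aCoeff α j n ≤ 0 := by
  have hΓ : 0 < Real.Gamma (1 - α) := Real.Gamma_pos_of_pos (by linarith)
  have hcoef : 0 < α / Real.Gamma (1 - α) := div_pos h0 hΓ
  refine ⟨?_, ?_, ?_⟩
  · have he : aCoeff α 0 n = -(α / Real.Gamma (1 - α)) * bCoeff α 1 n := by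
      simp [aCoeff]
    rw [he]
    have hb := bCoeff_pos h0 h1 (le_refl 1) hn
    nlinarith
  · have hn0 : n ≠ 0 := by omega
    simp only [aCoeff, if_neg hn0, if_pos rfl]
    have hb := bCoeff_pos h0 h1 hn (le_refl n)
    have hn' : (1 : ℝ) ≤ (n : ℝ) := by exact_mod_cast hn
    have hD : 0 < (n : ℝ) ^ α - ((n : ℝ) - 1) ^ α := by
      have := Real.rpow_lt_rpow (x := (n : ℝ) - 1) (y := (n : ℝ))
        (by linarith) (by linarith) h0
      linarith
    exact div_pos (mul_pos hcoef hb) hD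
  · intro j hj hjn
    have hjltn : j < n := by omega
    have hj0 : j ≠ 0 := by omega
    have hjn2 : j ≠ n := by omega
    simp only [aCoeff, if_neg hj0, if_neg hjn2]
    have hj' : (1 : ℝ) ≤ (j : ℝ) := by exact_mod_cast hj
    have hjn' : (j : ℝ) < (n : ℝ) := by exact_mod_cast hjltn
    have hD1 : 0 < (j : ℝ) ^ α - ((j : ℝ) - 1) ^ α := by
      have := Real.rpow_lt_rpow (x := (j : ℝ) - 1) (y := (j : ℝ)) (by linarith) (by linarith) h0
      linarith
    have hD2 : 0 < ((j : ℝ) + 1) ^ α - (j : ℝ) ^ α := by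
      have := Real.rpow_lt_rpow (x := (j : ℝ)) (y := (j : ℝ) + 1) (by linarith) (by linarith) h0
      linarith
    set c : ℝ := ((n : ℝ) - (j : ℝ)) ^ (-α) with hc
    have hupper := bCoeff_upper h0 h1 hj hjltn
    have hlower := bCoeff_lower h0 h1 (by omega : j + 1 ≤ n)
    have hA : bCoeff α j n / ((j : ℝ) ^ α - ((j : ℝ) - 1) ^ α) ≤ c / α := by
      rw [div_le_div_iff₀ hD1 h0]
      have := mul_le_mul_of_nonneg_right hupper h0.le
      rw [div_mul_cancel₀ _ (ne_of_gt h0)] at this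
      linarith [this]
    have hB : c / α ≤ bCoeff α (j + 1) n / (((j : ℝ) + 1) ^ α - (j : ℝ) ^ α) := by
      rw [div_le_div_iff₀ h0 hD2]
      have := mul_le_mul_of_nonneg_right hlower h0.le
      rw [div_mul_cancel₀ _ (ne_of_gt h0)] at this
      linarith [this]
    have hAB : bCoeff α j n / ((j : ℝ) ^ α - ((j : ℝ) - 1) ^ α) -
        bCoeff α (j + 1) n / (((j : ℝ) + 1) ^ α - (j : ℝ) ^ α) ≤ 0 := by linarith
    have := mul_le_mul_of_nonneg_left hAB hcoef.le
    simpa using this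
end

section
/- For α ∈ (0,1) and n ≥ 2, the coefficient a_{nn} = (α/Γ(1−α)) b_{nn}/(n^α−(n−1)^α) satisfies (1/Γ(2−α)) ((n−1)/n)^{1−α} ≤ a_{nn} ≤ (1/Γ(2−α)) (n/(n−1))^{1−α}. -/
open Real

theorem aCoeff_nn_bounds (α : ℝ) (h0 : 0 < α) (h1 : α < 1) (n : ℕ) (hn : 2 ≤ n) :
    (1 / Real.Gamma (2 - α)) * (((n : ℝ) - 1) / n) ^ (1 - α) ≤ aCoeff α n n ∧
    aCoeff α n n ≤ (1 / Real.Gamma (2 - α)) * ((n : ℝ) / ((n : ℝ) - 1)) ^ (1 - α) := by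
  have hn2 : (2:ℝ) ≤ (n:ℝ) := by exact_mod_cast hn
  set N : ℝ := (n:ℝ) with hN
  set m : ℝ := N - 1 with hm
  have hm1 : (1:ℝ) ≤ m := by rw [hm]; linarith
  have hm0 : 0 < m := lt_of_lt_of_le one_pos hm1
  have hN0 : 0 < N := by linarith
  have hmN : m < N := by rw [hm]; linarith
  have h1α : 0 < 1 - α := by linarith
  have hΓ1 : 0 < Real.Gamma (1 - α) := Real.Gamma_pos_of_pos h1α
  have hΓ2 : Real.Gamma (2 - α) = (1 - α) * Real.Gamma (1 - α) := by
    have h : (2:ℝ) - α = (1 - α) + 1 := by ring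
    rw [h, Real.Gamma_add_one (by linarith)]
  -- integrability of (N - x) ^ (-α)
  have hint : IntervalIntegrable (fun x => (N - x) ^ (-α)) MeasureTheory.volume m N := by
    have h := (intervalIntegral.intervalIntegrable_rpow' (a := N - N) (b := N - m) (r := -α)
      (by linarith)).comp_sub_left N
    simpa using h.symm
  -- value of ∫ (N - x)^(-α)
  have hC : (∫ x in m..N, (N - x) ^ (-α)) = 1 / (1 - α) := by
    rw [intervalIntegral.integral_comp_sub_left (fun x => x ^ (-α)) N]
    rw [integral_rpow (Or.inl (by linarith))]
    rw [sub_self]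
    rw [Real.zero_rpow (by linarith)]
    have : N - m = 1 := by simp [hm]
    rw [this, Real.one_rpow]
    ring
  -- integrability of x^(α-1) on [m,N]
  have hint2 : IntervalIntegrable (fun x : ℝ => x ^ (α - 1)) MeasureTheory.volume m N :=
    intervalIntegral.intervalIntegrable_rpow' (by linarith)
  -- integrability of the product
  have hintP : IntervalIntegrable (fun x => x ^ (α - 1) * (N - x) ^ (-α))
      MeasureTheory.volume m N := by
    apply hint.continuousOn_mul
    apply ContinuousOn.rpow_const
    · exact continuousOn_id
    · intro x hx
      left
      rw [Set.uIcc_of_le hmN.le] at hx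
      exact ne_of_gt (lt_of_lt_of_le hm0 hx.1)
  -- pointwise bounds on x^(α-1)
  have hptN : ∀ x ∈ Set.Icc m N, N ^ (α - 1) ≤ x ^ (α - 1) := fun x hx =>
    Real.rpow_le_rpow_of_nonpos (lt_of_lt_of_le hm0 hx.1) hx.2 (by linarith)
  have hptm : ∀ x ∈ Set.Icc m N, x ^ (α - 1) ≤ m ^ (α - 1) := fun x hx =>
    Real.rpow_le_rpow_of_nonpos hm0 hx.1 (by linarith)
  -- bounds on I1 = bCoeff
  set I1 : ℝ := ∫ x in m..N, x ^ (α - 1) * (N - x) ^ (-α) with hI1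
  have hI1low : N ^ (α - 1) * (1 / (1 - α)) ≤ I1 := by
    rw [← hC, ← intervalIntegral.integral_const_mul]
    apply intervalIntegral.integral_mono_on hmN.le (hint.const_mul _) hintP
    intro x hx
    exact mul_le_mul_of_nonneg_right (hptN x hx)
      (Real.rpow_nonneg (by linarith [hx.2]) _)
  have hI1high : I1 ≤ m ^ (α - 1) * (1 / (1 - α)) := by
    rw [← hC, ← intervalIntegral.integral_const_mul]
    apply intervalIntegral.integral_mono_on hmN.le hintP (hint.const_mul _)
    intro x hx
    exact mul_le_mul_of_nonneg_right (hptm x hx)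
      (Real.rpow_nonneg (by linarith [hx.2]) _)
  -- I2
  set I2 : ℝ := ∫ x in m..N, x ^ (α - 1) with hI2
  have hI2val : N ^ α - m ^ α = α * I2 := by
    rw [hI2, integral_rpow (Or.inl (by linarith))]
    have : α - 1 + 1 = α := by ring
    rw [this]
    field_simp
  have hI2low : N ^ (α - 1) ≤ I2 := by
    have h := intervalIntegral.integral_mono_on hmN.le
      (intervalIntegrable_const (c := N ^ (α - 1))) hint2 hptN
    rw [intervalIntegral.integral_const] at h
    have hNm : N - m = 1 := by simp [hm]
    rw [hNm] at h
    simpa using h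
  have hI2high : I2 ≤ m ^ (α - 1) := by
    have h := intervalIntegral.integral_mono_on hmN.le hint2
      (intervalIntegrable_const (c := m ^ (α - 1))) hptm
    rw [intervalIntegral.integral_const] at h
    have hNm : N - m = 1 := by simp [hm]
    rw [hNm] at h
    simpa using h
  have hI2pos : 0 < I2 := lt_of_lt_of_le (Real.rpow_pos_of_pos hN0 _) hI2low
  have hI1pos : 0 < I1 := lt_of_lt_of_le (by positivity) hI1low
  -- unfold aCoeff
  have hne : n ≠ 0 := by omega
  have ha : aCoeff α n n = I1 / (Real.Gamma (1 - α) * I2) := by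
    rw [aCoeff, if_neg hne, if_pos rfl]
    have hb : bCoeff α n n = I1 := rfl
    rw [hb]
    rw [show (n:ℝ) ^ α - ((n:ℝ) - 1) ^ α = α * I2 from hI2val]
    field_simp
  -- rpow ratio identities
  have hratio : ∀ a b : ℝ, 0 < a → 0 < b → a ^ (α - 1) / b ^ (α - 1) = (b / a) ^ (1 - α) := by
    intro a b ha hb
    rw [Real.div_rpow hb.le ha.le,
      show α - 1 = -(1 - α) by ring, Real.rpow_neg ha.le, Real.rpow_neg hb.le]
    field_simp
  constructor
  · rw [ha, hΓ2]
    have key : (1 / ((1 - α) * Real.Gamma (1 - α))) * (m / N) ^ (1 - α)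
        = (N ^ (α - 1) * (1 / (1 - α))) / (Real.Gamma (1 - α) * m ^ (α - 1)) := by
      rw [← hratio N m hN0 hm0]
      have hmp : (0:ℝ) < m ^ (α - 1) := Real.rpow_pos_of_pos hm0 _
      field_simp
    rw [key]
    apply div_le_div₀ hI1pos.le hI1low (by positivity)
    exact mul_le_mul_of_nonneg_left hI2high hΓ1.le
  · rw [ha, hΓ2]
    have key : (1 / ((1 - α) * Real.Gamma (1 - α))) * (N / m) ^ (1 - α)
        = (m ^ (α - 1) * (1 / (1 - α))) / (Real.Gamma (1 - α) * N ^ (α - 1)) := by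
      rw [← hratio m N hm0 hN0]
      have hNp : (0:ℝ) < N ^ (α - 1) := Real.rpow_pos_of_pos hN0 _
      field_simp
    rw [key]
    apply div_le_div₀ (by positivity) hI1high (by positivity)
    exact mul_le_mul_of_nonneg_left hI2low hΓ1.le
end

section
/- For α ∈ (0,1) and n ≥ 2, the coefficient a_{0n} = (α/Γ(1−α)) b_{1n} satisfies 1/(Γ(1−α) n^α) ≤ a_{0n} ≤ 1/(Γ(1−α)(n−1)^α). -/
open Real

theorem a0n_bounds (α : ℝ) (h0 : 0 < α) (h1 : α < 1) (n : ℕ) (hn : 2 ≤ n) :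
    1 / (Real.Gamma (1 - α) * (n : ℝ) ^ α) ≤ (α / Real.Gamma (1 - α)) * bCoeff α 1 n ∧
    (α / Real.Gamma (1 - α)) * bCoeff α 1 n ≤ 1 / (Real.Gamma (1 - α) * ((n : ℝ) - 1) ^ α) := by
  have hΓ : 0 < Real.Gamma (1 - α) := Real.Gamma_pos_of_pos (by linarith)
  have hn2 : (2:ℝ) ≤ (n:ℝ) := by exact_mod_cast hn
  have hn1 : (1:ℝ) ≤ (n:ℝ) - 1 := by linarith
  have hnpos : (0:ℝ) < (n:ℝ) := by linarith
  have hb : bCoeff α 1 n = ∫ x in (0:ℝ)..1, x ^ (α - 1) * ((n : ℝ) - x) ^ (-α) := by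
    simp [bCoeff]
  have hint1 : IntervalIntegrable (fun x : ℝ => x ^ (α - 1)) MeasureTheory.volume 0 1 :=
    intervalIntegral.intervalIntegrable_rpow' (by linarith)
  have hcont : ContinuousOn (fun x : ℝ => ((n:ℝ) - x) ^ (-α)) (Set.uIcc 0 1) := by
    apply ContinuousOn.rpow_const (continuous_const.sub continuous_id).continuousOn
    intro x hx
    rw [Set.uIcc_of_le (by norm_num)] at hx
    left
    simp only [Pi.sub_apply, id_eq]
    have : (n:ℝ) - x ≥ 1 := by linarith [hx.2]
    exact ne_of_gt (by linarith)
  have hint : IntervalIntegrable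
      (fun x : ℝ => x ^ (α - 1) * ((n:ℝ) - x) ^ (-α)) MeasureTheory.volume 0 1 :=
    hint1.mul_continuousOn hcont
  have hintc : ∀ c : ℝ, IntervalIntegrable
      (fun x : ℝ => x ^ (α - 1) * c) MeasureTheory.volume 0 1 :=
    fun c => hint1.mul_const c
  have hI : ∫ x in (0:ℝ)..1, x ^ (α - 1) = 1 / α := by
    rw [integral_rpow (Or.inl (by linarith))]
    rw [show α - 1 + 1 = α by ring, Real.one_rpow, Real.zero_rpow (ne_of_gt h0)]
    ring
  have hIc : ∀ c : ℝ, (∫ x in (0:ℝ)..1, x ^ (α - 1) * c) = c / α := by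
    intro c
    rw [intervalIntegral.integral_mul_const, hI]
    ring
  have hlow : ((n:ℝ)) ^ (-α) / α ≤ bCoeff α 1 n := by
    rw [hb, ← hIc]
    apply intervalIntegral.integral_mono_on (by norm_num) (hintc _) hint
    intro x hx
    have hx0 : 0 ≤ x := hx.1
    have hpos : (0:ℝ) < (n:ℝ) - x := by linarith [hx.2]
    have : ((n:ℝ)) ^ (-α) ≤ ((n:ℝ) - x) ^ (-α) :=
      Real.rpow_le_rpow_of_nonpos hpos (by linarith) (by linarith)
    exact mul_le_mul_of_nonneg_left this (Real.rpow_nonneg hx0 _)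
  have hhigh : bCoeff α 1 n ≤ ((n:ℝ) - 1) ^ (-α) / α := by
    rw [hb, ← hIc]
    apply intervalIntegral.integral_mono_on (by norm_num) hint (hintc _)
    intro x hx
    have hx0 : 0 ≤ x := hx.1
    have hpos : (0:ℝ) < (n:ℝ) - 1 := by linarith
    have : ((n:ℝ) - x) ^ (-α) ≤ ((n:ℝ) - 1) ^ (-α) :=
      Real.rpow_le_rpow_of_nonpos hpos (by linarith [hx.2]) (by linarith)
    exact mul_le_mul_of_nonneg_left this (Real.rpow_nonneg hx0 _)
  have hna : (0:ℝ) < (n:ℝ) ^ α := Real.rpow_pos_of_pos hnpos α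
  have hn1a : (0:ℝ) < ((n:ℝ) - 1) ^ α := Real.rpow_pos_of_pos (by linarith) α
  constructor
  · have key : (α / Real.Gamma (1 - α)) * ((n:ℝ) ^ (-α) / α) =
        1 / (Real.Gamma (1 - α) * (n:ℝ) ^ α) := by
      rw [Real.rpow_neg (le_of_lt hnpos)]
      field_simp
    rw [← key]
    apply mul_le_mul_of_nonneg_left hlow (by positivity)
  · have key : (α / Real.Gamma (1 - α)) * (((n:ℝ) - 1) ^ (-α) / α) =
        1 / (Real.Gamma (1 - α) * ((n:ℝ) - 1) ^ α) := by
      rw [Real.rpow_neg (by linarith)]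
      field_simp
    rw [← key]
    apply mul_le_mul_of_nonneg_left hhigh (by positivity)
end

section
/- For every α ∈ (0,1) there exists ε₀ > 0 such that for all ε ∈ (0, ε₀): (2^ε(1−α−ε)−(1−α))/α + (ε/(1−ε)) Γ(α+ε)Γ(1−α) + (απ/sin(απ)) ( (1 − 2^ε(1−α−ε))/α − 1/(1−ε) ) > 0. -/
open Real

theorem key_positivity (α : ℝ) (h0 : 0 < α) (h1 : α < 1) :
    ∃ ε₀ : ℝ, 0 < ε₀ ∧ ∀ ε : ℝ, 0 < ε → ε < ε₀ →
      ((2:ℝ) ^ ε * (1 - α - ε) - (1 - α)) / α +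
        (ε / (1 - ε)) * Real.Gamma (α + ε) * Real.Gamma (1 - α) +
        (α * Real.pi / Real.sin (α * Real.pi)) *
          ((1 - (2:ℝ) ^ ε * (1 - α - ε)) / α - 1 / (1 - ε)) > 0 := by
  set K : ℝ := α * Real.pi / Real.sin (α * Real.pi) with hK
  set f : ℝ → ℝ := fun ε =>
      ((2:ℝ) ^ ε * (1 - α - ε) - (1 - α)) / α +
        (ε / (1 - ε)) * Real.Gamma (α + ε) * Real.Gamma (1 - α) +
        K * ((1 - (2:ℝ) ^ ε * (1 - α - ε)) / α - 1 / (1 - ε)) with hf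
  -- sin (απ) > 0
  have hsin : 0 < Real.sin (α * Real.pi) := by
    apply Real.sin_pos_of_pos_of_lt_pi
    · positivity
    · nlinarith [Real.pi_pos]
  have hKge : 1 ≤ K := by
    rw [hK, le_div_iff₀ hsin]
    have := Real.sin_le (by positivity : 0 ≤ α * Real.pi)
    linarith
  -- derivative of g ε = 2^ε (1-α-ε)
  have h2pow : HasDerivAt (fun ε : ℝ => (2:ℝ) ^ ε) (Real.log 2) 0 := by
    have := (Real.hasStrictDerivAt_const_rpow (by norm_num : (0:ℝ) < 2) 0).hasDerivAt
    simpa using this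
  have hlin : HasDerivAt (fun ε : ℝ => 1 - α - ε) (-1) 0 := by
    simpa using ((hasDerivAt_id (0:ℝ)).const_sub (1 - α))
  have hg : HasDerivAt (fun ε : ℝ => (2:ℝ) ^ ε * (1 - α - ε))
      (Real.log 2 * (1 - α) - 1) 0 := by
    have := h2pow.mul hlin
    exact this.congr_deriv (by rw [Real.rpow_zero]; ring)
  -- derivative of ε/(1-ε) at 0 is 1
  have hr : HasDerivAt (fun ε : ℝ => ε / (1 - ε)) 1 0 := by
    have h1' : HasDerivAt (fun ε : ℝ => 1 - ε) (-1) 0 := by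
      simpa using ((hasDerivAt_id (0:ℝ)).const_sub 1)
    have := (hasDerivAt_id (0:ℝ)).div h1' (by norm_num)
    exact this.congr_deriv (by norm_num)
  -- derivative of 1/(1-ε) at 0 is 1
  have hr' : HasDerivAt (fun ε : ℝ => 1 / (1 - ε)) 1 0 := by
    have h1' : HasDerivAt (fun ε : ℝ => 1 - ε) (-1) 0 := by
      simpa using ((hasDerivAt_id (0:ℝ)).const_sub 1)
    have := (hasDerivAt_const (0:ℝ) (1:ℝ)).div h1' (by norm_num)
    exact this.congr_deriv (by norm_num)
  -- Gamma differentiable at α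
  have hGdiff : DifferentiableAt ℝ Real.Gamma α := by
    apply Real.differentiableAt_Gamma
    intro m
    have : (0:ℝ) ≤ m := Nat.cast_nonneg m
    intro h; rw [h] at h0; linarith
  obtain ⟨d, hGd⟩ : ∃ d, HasDerivAt Real.Gamma d α := ⟨_, hGdiff.hasDerivAt⟩
  have hGcomp : HasDerivAt (fun ε : ℝ => Real.Gamma (α + ε)) d 0 := by
    have hadd : HasDerivAt (fun ε : ℝ => α + ε) 1 0 := by
      simpa using ((hasDerivAt_id (0:ℝ)).const_add α)
    have := HasDerivAt.comp (0:ℝ) (by simpa using hGd) hadd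
    exact this.congr_deriv (by ring)
  -- full derivative
  set c : ℝ := 1 - Real.log 2 * (1 - α) with hc
  have hcpos : 0 < c := by
    have hl2 : Real.log 2 < 1 := by
      have := Real.log_two_lt_d9; linarith
    nlinarith [Real.log_pos (by norm_num : (1:ℝ) < 2)]
  set L : ℝ := (Real.log 2 * (1 - α) - 1) / α +
      (1 * Real.Gamma α + 0 * d) * Real.Gamma (1 - α) +
      K * ((0 - (Real.log 2 * (1 - α) - 1)) / α - 1) with hL
  have hfD : HasDerivAt f L 0 := by
    rw [hf, hL]
    apply HasDerivAt.add
    apply HasDerivAt.add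
    · exact (hg.sub_const (1 - α)).div_const α
    · exact ((hr.mul hGcomp).mul_const (Real.Gamma (1 - α))).congr_deriv (by ring)
    · exact (HasDerivAt.const_mul K (((hg.const_sub 1).div_const α).sub hr')).congr_deriv (by ring)
  have hf0 : f 0 = 0 := by
    rw [hf]
    have hα : α ≠ 0 := ne_of_gt h0
    field_simp
    rw [Real.rpow_zero]; ring
  have hLpos : 0 < L := by
    have hrefl : Real.Gamma α * Real.Gamma (1 - α) = Real.pi / Real.sin (Real.pi * α) :=
      Real.Gamma_mul_Gamma_one_sub α
    have hsin' : Real.sin (Real.pi * α) = Real.sin (α * Real.pi) := by ring_nf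
    rw [hL]
    have hKα : K / α = Real.pi / Real.sin (α * Real.pi) := by
      rw [hK]; field_simp
    -- L = -c/α + K/α + K*(c/α - 1) = (K*(1+c-α) - c)/α
    have hLval : (Real.log 2 * (1 - α) - 1) / α +
        (1 * Real.Gamma α + 0 * d) * Real.Gamma (1 - α) +
        K * ((0 - (Real.log 2 * (1 - α) - 1)) / α - 1)
        = (K * (1 + c - α) - c) / α := by
      rw [one_mul, zero_mul, add_zero, hrefl, hsin', ← hKα]
      field_simp
      ring
    rw [hLval]
    apply div_pos _ h0
    nlinarith [mul_le_mul_of_nonneg_right hKge (by linarith : (0:ℝ) ≤ 1 + c - α)]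
  -- slope argument
  have hslope : Filter.Tendsto (fun ε => f ε / ε) (nhdsWithin 0 (Set.Ioi 0)) (nhds L) := by
    have := hasDerivAt_iff_tendsto_slope.mp hfD
    have h2 := this.mono_left (nhdsWithin_mono 0 (by intro x hx; exact ne_of_gt hx : Set.Ioi (0:ℝ) ⊆ {(0:ℝ)}ᶜ))
    refine h2.congr' ?_
    filter_upwards [self_mem_nhdsWithin] with x hx
    simp [slope_def_field, hf0, div_eq_inv_mul]
  have hev : ∀ᶠ ε in nhdsWithin 0 (Set.Ioi 0), 0 < f ε / ε :=
    hslope.eventually (eventually_gt_nhds hLpos)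
  have hev' : ∀ᶠ ε in nhdsWithin 0 (Set.Ioi 0), 0 < f ε := by
    filter_upwards [hev, self_mem_nhdsWithin] with ε h hε
    have hε' : (0:ℝ) < ε := hε
    exact (div_pos_iff.mp h).resolve_right (by push_neg; intro h'; linarith) |>.1
  rw [eventually_nhdsWithin_iff, Metric.eventually_nhds_iff] at hev'
  obtain ⟨δ, hδ, hδ'⟩ := hev'
  refine ⟨δ, hδ, fun ε hε hε' => ?_⟩
  have : 0 < f ε := hδ' (by simpa [Real.dist_eq, abs_of_pos hε] using hε') hε
  simpa [hf] using this
end
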